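/- arXiv:1206.6605 — 3 statements merged into one kernel-verified Lean document; each statement's English description precedes it below -/
import Mathlib

section
/- For the path P_n with vertices 0,1,...,n and starting vertex r, the sum over all vertices k of the hitting times H_r(k) equals n(n+1)(2n+1)/6 + r(n-r). -/
open Finset

variable {V : Type*} [Fintype V] [DecidableEq V]

/-- One-step transition probability of simple random walk on `G`:
from `x`, move to a uniformly random neighbour. -/
noncomputable def SimpleGraph.step (G : SimpleGraph V) [DecidableRel G.Adj] (x y : V) : ℝ :=
  if G.Adj x y then ((G.degree x : ℝ))⁻¹ else 0

/-- `G.firstHitProb t r x`: probability that the first visit to `x` of simple random walk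
started at `r` occurs at time `t` (time `0` counts as a visit). -/
noncomputable def SimpleGraph.firstHitProb (G : SimpleGraph V) [DecidableRel G.Adj] :
    ℕ → V → V → ℝ
  | 0, r, x => if r = x then 1 else 0
  | (t+1), r, x => if r = x then 0 else ∑ z, G.step r z * G.firstHitProb t z x

/-- `G.hitTime r x`: expected hitting time `H_r(x)` of `x` for simple random walk from `r`. -/
noncomputable def SimpleGraph.hitTime (G : SimpleGraph V) [DecidableRel G.Adj] (r x : V) : ℝ :=
  ∑' t : ℕ, (t : ℝ) * G.firstHitProb t r x

/-- `G.firstInProb t r x y`: probability that the first visit of the walk from `r`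
to the set `{x, y}` occurs at time `t` and is a visit to `x` (time `0` counts). -/
noncomputable def SimpleGraph.firstInProb (G : SimpleGraph V) [DecidableRel G.Adj] :
    ℕ → V → V → V → ℝ
  | 0, r, x, _ => if r = x then 1 else 0
  | (t+1), r, x, y => if r = x ∨ r = y then 0 else ∑ z, G.step r z * G.firstInProb t z x y

/-- `G.probBefore r x y` = `p_r(x<y)`: probability that random walk from `r` visits `x`
strictly before `y` (visiting `x` at time `0` counts, so `p_r(r<y) = 1`). -/
noncomputable def SimpleGraph.probBefore (G : SimpleGraph V) [DecidableRel G.Adj]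
    (r x y : V) : ℝ :=
  ∑' t : ℕ, G.firstInProb t r x y

/-- `G.escProb x y` = `p_{xy}`: probability that random walk from `x` visits `y` before
returning to `x` (i.e. before visiting `x` again at a positive time). -/
noncomputable def SimpleGraph.escProb (G : SimpleGraph V) [DecidableRel G.Adj] (x y : V) : ℝ :=
  ∑ z, G.step x z * G.probBefore z y x

/-- `G.avoidProb y t z x`: probability that the walk started at `z` is at `x` at time `t`
and has not visited `y` at any time `≤ t`. -/
noncomputable def SimpleGraph.avoidProb (G : SimpleGraph V) [DecidableRel G.Adj] (y : V) :
    ℕ → V → V → ℝ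
  | 0, z, x => if z = y then 0 else if z = x then 1 else 0
  | (t+1), z, x => if z = y then 0 else ∑ w, G.step z w * G.avoidProb y t w x

/-- `G.visitsBefore x y` = `V_x^{†y}`: expected number of visits to `x` (counting time `0`)
of the walk started at `x` strictly before the first visit to `y`. -/
noncomputable def SimpleGraph.visitsBefore (G : SimpleGraph V) [DecidableRel G.Adj]
    (x y : V) : ℝ :=
  ∑' t : ℕ, G.avoidProb y t x x

/-- `G.coverDist r t (v, S)`: probability that the walk started at `r` is at `v` at time `t`
with `S` being the set of vertices visited so far. -/
noncomputable def SimpleGraph.coverDist (G : SimpleGraph V) [DecidableRel G.Adj] (r : V) :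
    ℕ → V × Finset V → ℝ
  | 0, p => if p = (r, {r}) then 1 else 0
  | (t+1), p => ∑ q : V × Finset V,
      (if p.2 = insert p.1 q.2 then G.step q.1 p.1 else 0) * G.coverDist r t q

/-- `G.coverTime r` = `CT_r(G)`: the expected number of steps of a cover tour of the walk
started at `r` (the walk stops once all vertices have been visited). -/
noncomputable def SimpleGraph.coverTime (G : SimpleGraph V) [DecidableRel G.Adj] (r : V) : ℝ :=
  ∑' t : ℕ, ∑ p : V × Finset V, if p.2 ≠ Finset.univ then G.coverDist r t p else 0

/-- `G.coverCost r` = `cc_r(G)`: the expected total cost of a cover tour from `r`, where a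
step taken when `k` vertices other than `r` have been visited so far costs `1 - k / n`,
with `n = |V| - 1`. -/
noncomputable def SimpleGraph.coverCost (G : SimpleGraph V) [DecidableRel G.Adj] (r : V) : ℝ :=
  ∑' t : ℕ, ∑ p : V × Finset V,
    if p.2 ≠ Finset.univ then
      G.coverDist r t p * (1 - ((p.2.erase r).card : ℝ) / ((Fintype.card V : ℝ) - 1))
    else 0

/-- `G.chargeD r x` = `D(x)`: the expected total charge departing from `x`, for the particle
started at `r` with charge `1` whose charge drops by `1/n` at each first visit to a vertex
other than `r` (it stops when the charge reaches `0`, i.e. when all vertices are covered). -/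
noncomputable def SimpleGraph.chargeD (G : SimpleGraph V) [DecidableRel G.Adj] (r x : V) : ℝ :=
  ∑' t : ℕ, ∑ S : Finset V,
    if S ≠ Finset.univ then
      G.coverDist r t (x, S) * (1 - ((S.erase r).card : ℝ) / ((Fintype.card V : ℝ) - 1))
    else 0

/-- The path graph on vertices `0, 1, …, n`, consecutive integers being adjacent. -/
def pathG (n : ℕ) : SimpleGraph (Fin (n+1)) where
  Adj i j := (i : ℕ) + 1 = j ∨ (j : ℕ) + 1 = i
  symm := ⟨fun i j h => h.symm⟩
  loopless := ⟨fun i h => by rcases h with h | h <;> omega⟩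

instance (n : ℕ) : DecidableRel (pathG n).Adj :=
  fun i j => inferInstanceAs (Decidable ((i : ℕ) + 1 = j ∨ (j : ℕ) + 1 = i))

/-- The star graph with center `0` and `n` leaves `1, …, n`. -/
def starG (n : ℕ) : SimpleGraph (Fin (n+1)) where
  Adj i j := i ≠ j ∧ (i = 0 ∨ j = 0)
  symm := ⟨fun i j h => ⟨h.1.symm, h.2.symm⟩⟩
  loopless := ⟨fun i h => h.1 rfl⟩

instance (n : ℕ) : DecidableRel (starG n).Adj :=
  fun i j => inferInstanceAs (Decidable (i ≠ j ∧ (i = 0 ∨ j = 0)))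

lemma pathG_adj {n : ℕ} {i j : Fin (n+1)} :
    (pathG n).Adj i j ↔ (i : ℕ) + 1 = j ∨ (j : ℕ) + 1 = i := Iff.rfl

lemma pathG_nbr_zero {n : ℕ} (hn : 1 ≤ n) {w : Fin (n+1)} (hw : (w:ℕ) = 0) :
    (pathG n).neighborFinset w = {(⟨1, by omega⟩ : Fin (n+1))} := by
  ext j
  simp only [SimpleGraph.mem_neighborFinset, pathG_adj, Finset.mem_singleton, Fin.ext_iff]
  have := j.isLt
  omega

lemma pathG_nbr_last {n : ℕ} (hn : 1 ≤ n) {w : Fin (n+1)} (hw : (w:ℕ) = n) :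
    (pathG n).neighborFinset w = {(⟨n-1, by omega⟩ : Fin (n+1))} := by
  ext j
  simp only [SimpleGraph.mem_neighborFinset, pathG_adj, Finset.mem_singleton, Fin.ext_iff]
  have := j.isLt
  omega

lemma pathG_nbr_mid {n : ℕ} {w : Fin (n+1)} (h0 : 0 < (w:ℕ)) (hn : (w:ℕ) < n) :
    (pathG n).neighborFinset w
      = {(⟨(w:ℕ)-1, by omega⟩ : Fin (n+1)), (⟨(w:ℕ)+1, by omega⟩ : Fin (n+1))} := by
  ext j
  simp only [SimpleGraph.mem_neighborFinset, pathG_adj, Finset.mem_insert,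
    Finset.mem_singleton, Fin.ext_iff]
  have := j.isLt
  omega

lemma pathG_degree_zero {n : ℕ} (hn : 1 ≤ n) {w : Fin (n+1)} (hw : (w:ℕ) = 0) :
    (pathG n).degree w = 1 := by
  rw [← SimpleGraph.card_neighborFinset_eq_degree, pathG_nbr_zero hn hw,
    Finset.card_singleton]

lemma pathG_degree_last {n : ℕ} (hn : 1 ≤ n) {w : Fin (n+1)} (hw : (w:ℕ) = n) :
    (pathG n).degree w = 1 := by
  rw [← SimpleGraph.card_neighborFinset_eq_degree, pathG_nbr_last hn hw,
    Finset.card_singleton]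

lemma pathG_degree_mid {n : ℕ} {w : Fin (n+1)} (h0 : 0 < (w:ℕ)) (hn : (w:ℕ) < n) :
    (pathG n).degree w = 2 := by
  rw [← SimpleGraph.card_neighborFinset_eq_degree, pathG_nbr_mid h0 hn]
  rw [Finset.card_insert_of_notMem (by simp only [Finset.mem_singleton, Fin.ext_iff]; omega), Finset.card_singleton]

lemma pathG_degree_pos {n : ℕ} (hn : 1 ≤ n) (w : Fin (n+1)) : 0 < (pathG n).degree w := by
  have hlt := w.isLt
  by_cases h0 : (w:ℕ) = 0
  · rw [pathG_degree_zero hn h0]; norm_num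
  · by_cases h1 : (w:ℕ) = n
    · rw [pathG_degree_last hn h1]; norm_num
    · rw [pathG_degree_mid (by omega) (by omega)]; norm_num

lemma pathG_degree_le_two {n : ℕ} (w : Fin (n+1)) : (pathG n).degree w ≤ 2 := by
  have hlt := w.isLt
  by_cases h0 : (w:ℕ) = 0
  · by_cases hn : 1 ≤ n
    · rw [pathG_degree_zero hn h0]; norm_num
    · interval_cases n
      · rw [← SimpleGraph.card_neighborFinset_eq_degree]
        have : (pathG 0).neighborFinset w = ∅ := by
          ext j
          simp only [SimpleGraph.mem_neighborFinset, pathG_adj, Finset.notMem_empty,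
            iff_false]
          have := j.isLt
          omega
        rw [this]; simp
  · by_cases h1 : (w:ℕ) = n
    · rw [pathG_degree_last (by omega) h1]; norm_num
    · rw [pathG_degree_mid (by omega) (by omega)]

lemma pathG_step_ge {n : ℕ} {w v : Fin (n+1)} (h : (pathG n).Adj w v) :
    (1/2 : ℝ) ≤ (pathG n).step w v := by
  unfold SimpleGraph.step
  rw [if_pos h]
  have h2 := pathG_degree_le_two w
  have h1 : 0 < (pathG n).degree w := by
    rw [SimpleGraph.degree_pos_iff_exists_adj]
    exact ⟨v, h⟩
  have hd0 : (0:ℝ) < (pathG n).degree w := by exact_mod_cast h1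
  have hd2 : ((pathG n).degree w : ℝ) ≤ 2 := by exact_mod_cast h2
  calc (1/2 : ℝ) = (2:ℝ)⁻¹ := by norm_num
    _ ≤ _ := inv_anti₀ hd0 hd2

namespace SimpleGraph

variable (G : SimpleGraph V) [DecidableRel G.Adj]

lemma step_nonneg (x y : V) : 0 ≤ G.step x y := by
  unfold step; split
  · positivity
  · exact le_refl 0

lemma sum_step (x : V) (h : 0 < G.degree x) : ∑ z, G.step x z = 1 := by
  unfold step
  rw [← Finset.sum_filter, Finset.sum_const, ← SimpleGraph.neighborFinset_eq_filter,
    SimpleGraph.card_neighborFinset_eq_degree, nsmul_eq_mul]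
  field_simp

lemma avoidProb_nonneg (y : V) (t : ℕ) (z x : V) : 0 ≤ G.avoidProb y t z x := by
  induction t generalizing z x with
  | zero => unfold avoidProb; split_ifs <;> norm_num
  | succ t ih =>
      unfold avoidProb; split
      · exact le_refl 0
      · exact Finset.sum_nonneg fun w _ => mul_nonneg (G.step_nonneg _ _) (ih w x)

lemma avoidProb_start (y : V) (t : ℕ) (x : V) : G.avoidProb y t y x = 0 := by
  cases t <;> simp [avoidProb]

lemma avoidProb_end (y : V) (t : ℕ) (z : V) : G.avoidProb y t z y = 0 := by
  induction t generalizing z with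
  | zero => unfold avoidProb; split_ifs <;> simp_all
  | succ t ih => unfold avoidProb; split_ifs with h; rfl; simp [ih]

lemma avoidProb_forward (y : V) (t : ℕ) (r z : V) :
    G.avoidProb y (t+1) r z = if z = y then 0 else ∑ w, G.avoidProb y t r w * G.step w z := by
  induction t generalizing r z with
  | zero =>
      show (if r = y then 0 else ∑ w, G.step r w * G.avoidProb y 0 w z) = _
      by_cases hz : z = y
      · subst hz
        simp [avoidProb_end]
      · rw [if_neg hz]
        by_cases hr : r = y
        · subst hr
          simp [avoidProb_start]
        · rw [if_neg hr]
          rw [Finset.sum_eq_single z (fun w _ hw => by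
              by_cases hwy : w = y <;> simp [avoidProb, hwy, hw]) (by simp)]
          rw [Finset.sum_eq_single r (fun w _ hw => by
              simp [avoidProb, hr, Ne.symm hw]) (by simp)]
          simp [avoidProb, hz, hr]
  | succ t ih =>
      by_cases hr : r = y
      · simp [hr, avoidProb_start]
      · show (if r = y then _ else ∑ w, G.step r w * G.avoidProb y (t+1) w z) = _
        rw [if_neg hr]
        by_cases hz : z = y
        · simp only [if_pos hz]
          refine Finset.sum_eq_zero fun w _ => ?_
          rw [ih, if_pos hz, mul_zero]
        · rw [if_neg hz]
          calc ∑ w, G.step r w * G.avoidProb y (t+1) w z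
              = ∑ w, G.step r w * ∑ v, G.avoidProb y t w v * G.step v z := by
                refine Finset.sum_congr rfl fun w _ => ?_
                rw [ih, if_neg hz]
            _ = ∑ v, (∑ w, G.step r w * G.avoidProb y t w v) * G.step v z := by
                simp_rw [Finset.mul_sum, Finset.sum_mul]
                rw [Finset.sum_comm]
                exact Finset.sum_congr rfl fun v _ => Finset.sum_congr rfl fun w _ => by ring
            _ = ∑ v, G.avoidProb y (t+1) r v * G.step v z := by
                refine Finset.sum_congr rfl fun v _ => ?_
                show _ = (if r = y then (0:ℝ) else ∑ w, G.step r w * G.avoidProb y t w v) * _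
                rw [if_neg hr]

end SimpleGraph

namespace SimpleGraph
variable (G : SimpleGraph V) [DecidableRel G.Adj]

lemma firstHitProb_nonneg (t : ℕ) (r x : V) : 0 ≤ G.firstHitProb t r x := by
  induction t generalizing r with
  | zero => unfold firstHitProb; split_ifs <;> norm_num
  | succ t ih =>
      unfold firstHitProb; split
      · exact le_refl 0
      · exact Finset.sum_nonneg fun w _ => mul_nonneg (G.step_nonneg _ _) (ih w)

lemma firstHitProb_eq_avoid (x : V) (t : ℕ) (r : V) :
    G.firstHitProb (t+1) r x = ∑ z, G.avoidProb x t r z * G.step z x := by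
  induction t generalizing r with
  | zero =>
      show (if r = x then 0 else ∑ w, G.step r w * G.firstHitProb 0 w x) = _
      by_cases hr : r = x
      · subst hr; simp [avoidProb_start]
      · rw [if_neg hr,
          Finset.sum_eq_single x (fun w _ hw => by simp [firstHitProb, hw]) (by simp),
          Finset.sum_eq_single r (fun w _ hw => by simp [avoidProb, hr, Ne.symm hw]) (by simp)]
        simp [firstHitProb, avoidProb, hr]
  | succ t ih =>
      show (if r = x then 0 else ∑ w, G.step r w * G.firstHitProb (t+1) w x) = _
      by_cases hr : r = x
      · subst hr
        rw [if_pos rfl, Finset.sum_eq_zero]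
        intro z _
        rw [avoidProb_start, zero_mul]
      · rw [if_neg hr]
        calc ∑ w, G.step r w * G.firstHitProb (t+1) w x
            = ∑ w, G.step r w * ∑ z, G.avoidProb x t w z * G.step z x := by
              exact Finset.sum_congr rfl fun w _ => by rw [ih]
          _ = ∑ z, (∑ w, G.step r w * G.avoidProb x t w z) * G.step z x := by
              simp_rw [Finset.mul_sum, Finset.sum_mul]
              rw [Finset.sum_comm]
              exact Finset.sum_congr rfl fun v _ => Finset.sum_congr rfl fun w _ => by ring
          _ = ∑ z, G.avoidProb x (t+1) r z * G.step z x := by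
              refine Finset.sum_congr rfl fun z _ => ?_
              show _ = (if r = x then (0:ℝ) else ∑ w, G.step r w * G.avoidProb x t w z) * _
              rw [if_neg hr]

lemma avoidProb_chapman (y : V) (s t : ℕ) (r z : V) :
    G.avoidProb y (s+t) r z = ∑ w, G.avoidProb y s r w * G.avoidProb y t w z := by
  induction s generalizing r with
  | zero =>
      by_cases hr : r = y
      · simp [hr, avoidProb_start]
      · rw [Nat.zero_add,
          Finset.sum_eq_single r (fun w _ hw => by simp [avoidProb, hr, Ne.symm hw]) (by simp)]
        simp [avoidProb, hr]
  | succ s ih =>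
      have hs : s + 1 + t = (s + t) + 1 := by omega
      rw [hs]
      by_cases hr : r = y
      · simp [hr, avoidProb_start]
      · show (if r = y then 0 else ∑ w, G.step r w * G.avoidProb y (s+t) w z) = _
        rw [if_neg hr]
        calc ∑ w, G.step r w * G.avoidProb y (s+t) w z
            = ∑ w, G.step r w * ∑ v, G.avoidProb y s w v * G.avoidProb y t v z := by
              exact Finset.sum_congr rfl fun w _ => by rw [ih]
          _ = ∑ v, (∑ w, G.step r w * G.avoidProb y s w v) * G.avoidProb y t v z := by
              simp_rw [Finset.mul_sum, Finset.sum_mul]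
              rw [Finset.sum_comm]
              exact Finset.sum_congr rfl fun v _ => Finset.sum_congr rfl fun w _ => by ring
          _ = ∑ v, G.avoidProb y (s+1) r v * G.avoidProb y t v z := by
              refine Finset.sum_congr rfl fun v _ => ?_
              show _ = (if r = y then (0:ℝ) else ∑ w, G.step r w * G.avoidProb y s w v) * _
              rw [if_neg hr]

lemma sum_avoid_antitone (hdeg : ∀ w, 0 < G.degree w) (y : V) (r : V) :
    Antitone (fun t => ∑ z, G.avoidProb y t r z) := by
  refine antitone_nat_of_succ_le fun t => ?_
  calc ∑ z, G.avoidProb y (t+1) r z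
      ≤ ∑ z, ∑ w, G.avoidProb y t r w * G.step w z := by
        refine Finset.sum_le_sum fun z _ => ?_
        rw [G.avoidProb_forward]
        split_ifs
        · exact Finset.sum_nonneg fun w _ =>
            mul_nonneg (G.avoidProb_nonneg _ _ _ _) (G.step_nonneg _ _)
        · exact le_refl _
    _ = ∑ w, G.avoidProb y t r w * ∑ z, G.step w z := by
        rw [Finset.sum_comm]; simp_rw [Finset.mul_sum]
    _ = ∑ w, G.avoidProb y t r w := by
        refine Finset.sum_congr rfl fun w _ => ?_
        rw [G.sum_step w (hdeg w), mul_one]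

lemma sum_avoid_decay (y : V) {N : ℕ} {θ : ℝ} (hθ0 : 0 ≤ θ)
    (hdecay : ∀ w, ∑ z, G.avoidProb y N w z ≤ θ) (r : V) (k : ℕ) :
    ∑ z, G.avoidProb y (k * N) r z ≤ θ ^ k := by
  induction k generalizing r with
  | zero =>
      rw [Nat.zero_mul, pow_zero]
      by_cases hr : r = y
      · simp [hr, avoidProb_start]
      · rw [Finset.sum_eq_single r (fun w _ hw => by simp [avoidProb, hr, Ne.symm hw]) (by simp)]
        simp [avoidProb, hr]
  | succ k ih =>
      have hs : (k+1) * N = k * N + N := by ring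
      rw [hs, pow_succ]
      calc ∑ z, G.avoidProb y (k * N + N) r z
          = ∑ z, ∑ w, G.avoidProb y (k*N) r w * G.avoidProb y N w z := by
            exact Finset.sum_congr rfl fun z _ => by rw [G.avoidProb_chapman]
        _ = ∑ w, G.avoidProb y (k*N) r w * ∑ z, G.avoidProb y N w z := by
            rw [Finset.sum_comm]; simp_rw [Finset.mul_sum]
        _ ≤ ∑ w, G.avoidProb y (k*N) r w * θ := by
            refine Finset.sum_le_sum fun w _ => ?_
            exact mul_le_mul_of_nonneg_left (hdecay w) (G.avoidProb_nonneg _ _ _ _)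
        _ = (∑ w, G.avoidProb y (k*N) r w) * θ := by rw [Finset.sum_mul]
        _ ≤ θ ^ k * θ := mul_le_mul_of_nonneg_right (ih r) hθ0

lemma conservation (x : V) (φ : V → ℝ) (hdeg : ∀ w, 0 < G.degree w) (hφx : φ x = 0)
    (hharm : ∀ w, w ≠ x → ∑ z, G.step w z * φ z = φ w - 1) (r : V) (t : ℕ) :
    ∑ s ∈ Finset.range (t+1), (s:ℝ) * G.firstHitProb s r x
      + ∑ z, G.avoidProb x t r z * ((t:ℝ) + φ z) = φ r := by
  have key : ∀ (f : V → ℝ), ∑ z, (if z = x then 0 else f z) = ∑ z, f z - f x := by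
    intro f
    have h1 : ∑ z, (if z = x then f z else 0) = f x := by
      rw [Finset.sum_ite_eq' Finset.univ x f]; simp
    have h2 : ∀ z : V, (if z = x then (0:ℝ) else f z) = f z - (if z = x then f z else 0) := by
      intro z; split_ifs <;> ring
    simp_rw [h2]
    rw [Finset.sum_sub_distrib, h1]
  induction t with
  | zero =>
      rw [Finset.sum_range_one]
      by_cases hr : r = x
      · simp [hr, avoidProb_start, hφx]
      · rw [Finset.sum_eq_single r (fun w _ hw => by simp [avoidProb, hr, Ne.symm hw]) (by simp)]
        simp [avoidProb, hr]
  | succ t ih =>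
      rw [Finset.sum_range_succ]
      have hfwd : ∑ z, G.avoidProb x (t+1) r z * (((t:ℝ)+1) + φ z)
          = ∑ z, G.avoidProb x t r z * ((t:ℝ) + φ z)
            - ((t:ℝ)+1) * G.firstHitProb (t+1) r x := by
        calc ∑ z, G.avoidProb x (t+1) r z * (((t:ℝ)+1) + φ z)
            = ∑ z, (if z = x then 0 else
                (∑ w, G.avoidProb x t r w * G.step w z) * (((t:ℝ)+1) + φ z)) := by
              refine Finset.sum_congr rfl fun z _ => ?_
              rw [G.avoidProb_forward]
              split_ifs <;> simp
          _ = ∑ z, (∑ w, G.avoidProb x t r w * G.step w z) * (((t:ℝ)+1) + φ z)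
              - (∑ w, G.avoidProb x t r w * G.step w x) * (((t:ℝ)+1) + φ x) := key _
          _ = ∑ w, G.avoidProb x t r w * (∑ z, G.step w z * (((t:ℝ)+1) + φ z))
              - ((t:ℝ)+1) * G.firstHitProb (t+1) r x := by
              rw [G.firstHitProb_eq_avoid, hφx, add_zero, Finset.sum_mul]
              congr 1
              · simp_rw [Finset.sum_mul, Finset.mul_sum]
                rw [Finset.sum_comm]
                exact Finset.sum_congr rfl fun z _ => Finset.sum_congr rfl fun w _ => by ring
              · rw [Finset.mul_sum]
                exact Finset.sum_congr rfl fun w _ => by ring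
          _ = ∑ w, G.avoidProb x t r w * ((t:ℝ) + φ w)
              - ((t:ℝ)+1) * G.firstHitProb (t+1) r x := by
              congr 1
              refine Finset.sum_congr rfl fun w _ => ?_
              by_cases hw : w = x
              · simp [hw, avoidProb_end]
              · have : ∑ z, G.step w z * (((t:ℝ)+1) + φ z)
                    = ((t:ℝ)+1) * ∑ z, G.step w z + ∑ z, G.step w z * φ z := by
                  rw [Finset.mul_sum, ← Finset.sum_add_distrib]
                  exact Finset.sum_congr rfl fun z _ => by ring
                rw [this, G.sum_step w (hdeg w), hharm w hw]
                ring
      push_cast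
      push_cast at hfwd ih
      rw [hfwd]
      linarith [ih]

end SimpleGraph

namespace SimpleGraph
variable (G : SimpleGraph V) [DecidableRel G.Adj]

lemma hitTime_eq_of_potential (x : V) (φ : V → ℝ) (hdeg : ∀ w, 0 < G.degree w)
    (hφx : φ x = 0) (hφ0 : ∀ z, 0 ≤ φ z)
    (hharm : ∀ w, w ≠ x → ∑ z, G.step w z * φ z = φ w - 1)
    (N : ℕ) (hN : 0 < N) (θ : ℝ) (hθ0 : 0 ≤ θ) (hθ1 : θ < 1)
    (hdecay : ∀ w, ∑ z, G.avoidProb x N w z ≤ θ) (r : V) :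
    G.hitTime r x = φ r := by
  set f : ℕ → ℝ := fun t => (t:ℝ) * G.firstHitProb t r x with hf
  have hfnn : ∀ t, 0 ≤ f t := fun t =>
    mul_nonneg (Nat.cast_nonneg t) (G.firstHitProb_nonneg t r x)
  set R : ℕ → ℝ := fun t => ∑ z, G.avoidProb x t r z * ((t:ℝ) + φ z) with hR
  have hcons : ∀ t, ∑ s ∈ Finset.range (t+1), f s + R t = φ r :=
    fun t => G.conservation x φ hdeg hφx hharm r t
  have hRnn : ∀ t, 0 ≤ R t := fun t =>
    Finset.sum_nonneg fun z _ => mul_nonneg (G.avoidProb_nonneg _ _ _ _)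
      (add_nonneg (Nat.cast_nonneg t) (hφ0 z))
  -- R t → 0
  set C : ℝ := ∑ z, φ z with hC
  have hφC : ∀ z, φ z ≤ C := fun z =>
    Finset.single_le_sum (fun z _ => hφ0 z) (Finset.mem_univ z)
  set A : ℕ → ℝ := fun t => ∑ z, G.avoidProb x t r z with hA
  have hAnn : ∀ t, 0 ≤ A t := fun t =>
    Finset.sum_nonneg fun z _ => G.avoidProb_nonneg _ _ _ _
  have hAbound : ∀ t, A t ≤ θ ^ (t / N) := by
    intro t
    have h1 : A t ≤ A ((t / N) * N) :=
      G.sum_avoid_antitone hdeg x r (Nat.div_mul_le_self t N)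
    exact h1.trans (G.sum_avoid_decay x hθ0 hdecay r (t / N))
  have hC0 : 0 ≤ C := Finset.sum_nonneg fun z _ => hφ0 z
  have hRb : ∀ t, R t ≤ (((N : ℝ) * (t / N : ℕ) + N + C)) * θ ^ (t / N) := by
    intro t
    have h2 : R t ≤ ((t:ℝ) + C) * A t := by
      rw [hR, hA, Finset.mul_sum]
      refine Finset.sum_le_sum fun z _ => ?_
      nlinarith [mul_nonneg (G.avoidProb_nonneg x t r z) (sub_nonneg.2 (hφC z))]
    refine h2.trans ?_
    have h4 : t < N * (t/N) + N := by
      conv_lhs => rw [← Nat.div_add_mod t N]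
      exact Nat.add_lt_add_left (Nat.mod_lt t hN) _
    have hle : (t:ℝ) + C ≤ (N : ℝ) * (t / N : ℕ) + N + C := by
      have h3 : (t:ℝ) < (N:ℝ) * ((t / N : ℕ):ℝ) + (N:ℝ) := by exact_mod_cast h4
      linarith
    have hq : (0:ℝ) ≤ (N : ℝ) * (t / N : ℕ) + N + C := by
      have : (0:ℝ) ≤ (N:ℝ) * ((t / N : ℕ):ℝ) := by positivity
      have : (0:ℝ) ≤ (N:ℝ) := by positivity
      linarith
    calc ((t:ℝ)+C) * A t
        ≤ ((N : ℝ) * (t / N : ℕ) + N + C) * A t :=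
          mul_le_mul_of_nonneg_right hle (hAnn t)
      _ ≤ _ := mul_le_mul_of_nonneg_left (hAbound t) hq
  have hR0 : Filter.Tendsto R Filter.atTop (nhds 0) := by
    have hc : Filter.Tendsto (fun k : ℕ => ((N : ℝ) * k + N + C) * θ ^ k)
        Filter.atTop (nhds 0) := by
      have h1 : Filter.Tendsto (fun k : ℕ => (k:ℝ) * θ ^ k) Filter.atTop (nhds 0) := by
        have := (summable_pow_mul_geometric_of_norm_lt_one 1
          (r := θ) (by rwa [Real.norm_eq_abs, abs_of_nonneg hθ0])).tendsto_atTop_zero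
        simpa using this
      have h2 : Filter.Tendsto (fun k : ℕ => θ ^ k) Filter.atTop (nhds 0) :=
        tendsto_pow_atTop_nhds_zero_of_lt_one hθ0 hθ1
      have := ((h1.const_mul (N:ℝ)).add (h2.const_mul ((N:ℝ) + C)))
      simpa [mul_add, add_mul, mul_assoc, mul_comm, mul_left_comm, add_assoc] using this
    have hdiv : Filter.Tendsto (fun t : ℕ => t / N) Filter.atTop Filter.atTop := by
      refine Filter.tendsto_atTop_atTop.2 fun b => ⟨b * N, fun a ha => ?_⟩
      exact (Nat.le_div_iff_mul_le hN).2 ha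
    exact squeeze_zero hRnn hRb (hc.comp hdiv)
  -- summability
  have hsum : Summable f := by
    refine summable_of_sum_range_le (c := φ r) hfnn fun m => ?_
    calc ∑ s ∈ Finset.range m, f s ≤ ∑ s ∈ Finset.range (m+1), f s := by
          rw [Finset.sum_range_succ]; linarith [hfnn m]
      _ ≤ φ r := by linarith [hcons m, hRnn m]
  have hlim1 : Filter.Tendsto (fun m => ∑ s ∈ Finset.range m, f s)
      Filter.atTop (nhds (∑' t, f t)) := hsum.hasSum.tendsto_sum_nat
  have hlim2 : Filter.Tendsto (fun t : ℕ => ∑ s ∈ Finset.range (t+1), f s)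
      Filter.atTop (nhds (φ r)) := by
    have : (fun t : ℕ => ∑ s ∈ Finset.range (t+1), f s) = fun t => φ r - R t := by
      funext t; linarith [hcons t]
    rw [this]
    simpa using (tendsto_const_nhds (x := φ r)).sub hR0
  have hlim1' : Filter.Tendsto (fun t : ℕ => ∑ s ∈ Finset.range (t+1), f s)
      Filter.atTop (nhds (∑' t, f t)) :=
    hlim1.comp (Filter.tendsto_add_atTop_nat 1)
  exact tendsto_nhds_unique hlim1' hlim2

lemma hitTime_self (r : V) : G.hitTime r r = 0 := by
  unfold hitTime
  rw [show (fun t : ℕ => (t:ℝ) * G.firstHitProb t r r) = fun _ => 0 from ?_, tsum_zero]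
  funext t
  cases t with
  | zero => simp
  | succ t => simp [firstHitProb]

end SimpleGraph

namespace SimpleGraph
variable (G : SimpleGraph V) [DecidableRel G.Adj]

lemma sum_avoid_succ (y : V) (t : ℕ) {w : V} (hwy : w ≠ y) :
    ∑ z, G.avoidProb y (t+1) w z = ∑ v, G.step w v * ∑ z, G.avoidProb y t v z := by
  calc ∑ z, G.avoidProb y (t+1) w z
      = ∑ z, ∑ v, G.step w v * G.avoidProb y t v z := by
        refine Finset.sum_congr rfl fun z _ => ?_
        show (if w = y then 0 else ∑ v, G.step w v * G.avoidProb y t v z) = _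
        rw [if_neg hwy]
    _ = _ := by
        rw [Finset.sum_comm]; simp_rw [Finset.mul_sum]

lemma sum_avoid_le_one (hdeg : ∀ w, 0 < G.degree w) (y : V) (t : ℕ) (w : V) :
    ∑ z, G.avoidProb y t w z ≤ 1 := by
  induction t generalizing w with
  | zero =>
      by_cases hw : w = y
      · simp [hw, avoidProb_start]
      · rw [Finset.sum_eq_single w (fun z _ hz => by simp [avoidProb, hw, Ne.symm hz]) (by simp)]
        simp [avoidProb, hw]
  | succ t ih =>
      by_cases hw : w = y
      · simp [hw, avoidProb_start]
      · rw [G.sum_avoid_succ y t hw]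
        calc ∑ v, G.step w v * ∑ z, G.avoidProb y t v z
            ≤ ∑ v, G.step w v * 1 := by
              refine Finset.sum_le_sum fun v _ => ?_
              exact mul_le_mul_of_nonneg_left (ih v) (G.step_nonneg _ _)
          _ = 1 := by simp [G.sum_step w (hdeg w)]

lemma sum_step_mul (w : V) (φ : V → ℝ) :
    ∑ z, G.step w z * φ z = ((G.degree w : ℝ))⁻¹ * ∑ z ∈ G.neighborFinset w, φ z := by
  rw [Finset.mul_sum, SimpleGraph.neighborFinset_eq_filter, Finset.sum_filter]
  refine Finset.sum_congr rfl fun z _ => ?_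
  unfold step
  split_ifs <;> simp

end SimpleGraph

lemma pathG_avoid_bound {n : ℕ} (hn : 1 ≤ n) (x : Fin (n+1)) :
    ∀ (t : ℕ) (w : Fin (n+1)), Nat.dist (w:ℕ) (x:ℕ) ≤ t →
      ∑ z, (pathG n).avoidProb x t w z ≤ 1 - (1/2 : ℝ)^t := by
  intro t
  induction t with
  | zero =>
      intro w hw
      have hwx : w = x := by
        simp only [Nat.dist] at hw
        exact Fin.ext (by omega)
      simp [hwx, SimpleGraph.avoidProb_start]
  | succ t ih =>
      intro w hw
      by_cases hwx : w = x
      · rw [Finset.sum_eq_zero (fun z _ => by rw [hwx, SimpleGraph.avoidProb_start])]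
        have : (1/2:ℝ)^(t+1) ≤ 1 := by
          apply pow_le_one₀ <;> norm_num
        linarith
      · -- pick the closer neighbour
        have hvx : (w:ℕ) ≠ (x:ℕ) := fun h => hwx (Fin.ext h)
        have hwlt := w.isLt
        have hxlt := x.isLt
        obtain ⟨v, hadj, hdist⟩ :
            ∃ v : Fin (n+1), (pathG n).Adj w v ∧ Nat.dist (v:ℕ) (x:ℕ) ≤ t := by
          by_cases hlt : (w:ℕ) < (x:ℕ)
          · refine ⟨⟨(w:ℕ)+1, by omega⟩, Or.inl rfl, ?_⟩
            simp only [Nat.dist] at hw ⊢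
            omega
          · refine ⟨⟨(w:ℕ)-1, by omega⟩, Or.inr (by simp; omega), ?_⟩
            simp only [Nat.dist] at hw ⊢
            omega
        rw [(pathG n).sum_avoid_succ x t hwx]
        set B : Fin (n+1) → ℝ := fun u => ∑ z, (pathG n).avoidProb x t u z with hB
        have hB1 : ∀ u, B u ≤ 1 :=
          fun u => (pathG n).sum_avoid_le_one (pathG_degree_pos hn) x t u
        have hstep1 : ∑ u, (pathG n).step w u = 1 :=
          (pathG n).sum_step w (pathG_degree_pos hn w)
        have hsplit := Finset.add_sum_erase Finset.univ
          (fun u => (pathG n).step w u * B u) (Finset.mem_univ v)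
        have hsplit2 := Finset.add_sum_erase Finset.univ
          (fun u => (pathG n).step w u) (Finset.mem_univ v)
        have hb : ∑ u ∈ Finset.univ.erase v, (pathG n).step w u * B u
            ≤ ∑ u ∈ Finset.univ.erase v, (pathG n).step w u := by
          refine Finset.sum_le_sum fun u _ => ?_
          have := (pathG n).step_nonneg w u
          nlinarith [hB1 u, mul_nonneg this (sub_nonneg.2 (hB1 u))]
        have hstep : (1/2:ℝ) ≤ (pathG n).step w v := pathG_step_ge hadj
        have hBt : B v ≤ 1 - (1/2:ℝ)^t := ih v hdist
        have hp : (0:ℝ) ≤ (1/2:ℝ)^t := by positivity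
        have hsnn : (0:ℝ) ≤ (pathG n).step w v := (pathG n).step_nonneg w v
        calc ∑ u, (pathG n).step w u * B u
            = (pathG n).step w v * B v
              + ∑ u ∈ Finset.univ.erase v, (pathG n).step w u * B u := hsplit.symm
          _ ≤ (pathG n).step w v * (1 - (1/2:ℝ)^t)
              + (1 - (pathG n).step w v) := by
              have h1 : ∑ u ∈ Finset.univ.erase v, (pathG n).step w u
                  = 1 - (pathG n).step w v := by
                rw [← hstep1, ← hsplit2]; ring
              rw [← h1] at *
              have := mul_le_mul_of_nonneg_left hBt hsnn
              linarith
          _ = 1 - (pathG n).step w v * (1/2:ℝ)^t := by ring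
          _ ≤ 1 - (1/2:ℝ)^(t+1) := by
              have := mul_le_mul_of_nonneg_right hstep hp
              rw [pow_succ]
              nlinarith

noncomputable def pathPhi (n : ℕ) (x z : Fin (n+1)) : ℝ :=
  if (z:ℕ) ≤ (x:ℕ) then ((x:ℕ):ℝ)^2 - ((z:ℕ):ℝ)^2
  else ((n:ℝ) - ((x:ℕ):ℝ))^2 - ((n:ℝ) - ((z:ℕ):ℝ))^2

lemma pathPhi_le {n : ℕ} {x z : Fin (n+1)} (h : (z:ℕ) ≤ (x:ℕ)) :
    pathPhi n x z = ((x:ℕ):ℝ)^2 - ((z:ℕ):ℝ)^2 := if_pos h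

lemma pathPhi_ge {n : ℕ} {x z : Fin (n+1)} (h : (x:ℕ) ≤ (z:ℕ)) :
    pathPhi n x z = ((n:ℝ) - ((x:ℕ):ℝ))^2 - ((n:ℝ) - ((z:ℕ):ℝ))^2 := by
  unfold pathPhi
  split_ifs with h'
  · have hz : (z:ℕ) = (x:ℕ) := by omega
    rw [hz]
    ring
  · rfl

lemma pathPhi_nonneg {n : ℕ} (x z : Fin (n+1)) : 0 ≤ pathPhi n x z := by
  have hz : (z:ℕ) ≤ n := by omega
  have hx : (x:ℕ) ≤ n := by omega
  have hzr : ((z:ℕ):ℝ) ≤ (n:ℝ) := by exact_mod_cast hz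
  have hxr : ((x:ℕ):ℝ) ≤ (n:ℝ) := by exact_mod_cast hx
  unfold pathPhi
  split_ifs with h
  · have : ((z:ℕ):ℝ) ≤ ((x:ℕ):ℝ) := by exact_mod_cast h
    have hz0 : (0:ℝ) ≤ ((z:ℕ):ℝ) := by positivity
    nlinarith
  · have : ((x:ℕ):ℝ) ≤ ((z:ℕ):ℝ) := by exact_mod_cast (by omega : (x:ℕ) ≤ (z:ℕ))
    nlinarith

lemma pathPhi_self {n : ℕ} (x : Fin (n+1)) : pathPhi n x x = 0 := by
  rw [pathPhi_le (le_refl _)]; ring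

lemma pathPhi_harm {n : ℕ} (hn : 1 ≤ n) (x : Fin (n+1)) (w : Fin (n+1)) (hwx : w ≠ x) :
    ∑ z, (pathG n).step w z * pathPhi n x z = pathPhi n x w - 1 := by
  have hwn := w.isLt
  have hxn := x.isLt
  have hvx : (w:ℕ) ≠ (x:ℕ) := fun h => hwx (Fin.ext h)
  rw [(pathG n).sum_step_mul w (pathPhi n x)]
  by_cases h0 : (w:ℕ) = 0
  · rw [pathG_nbr_zero hn h0, pathG_degree_zero hn h0, Finset.sum_singleton]
    rw [pathPhi_le (show (((⟨1, by omega⟩ : Fin (n+1)):ℕ)) ≤ (x:ℕ) by simp; omega),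
      pathPhi_le (show (w:ℕ) ≤ (x:ℕ) by omega)]
    simp only [Fin.val_mk]
    push_cast [h0]
    ring
  · by_cases h1 : (w:ℕ) = n
    · rw [pathG_nbr_last hn h1, pathG_degree_last hn h1, Finset.sum_singleton]
      rw [pathPhi_ge (show (x:ℕ) ≤ (((⟨n-1, by omega⟩ : Fin (n+1)):ℕ)) by simp; omega),
        pathPhi_ge (show (x:ℕ) ≤ (w:ℕ) by omega)]
      simp only [Fin.val_mk]
      push_cast [Nat.cast_sub hn, h1]
      ring
    · have hw0 : 0 < (w:ℕ) := by omega
      have hwn' : (w:ℕ) < n := by omega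
      rw [pathG_nbr_mid hw0 hwn', pathG_degree_mid hw0 hwn',
        Finset.sum_insert (by simp only [Finset.mem_singleton, Fin.ext_iff, Fin.val_mk]; omega),
        Finset.sum_singleton]
      by_cases hlt : (w:ℕ) < (x:ℕ)
      · rw [pathPhi_le (show (((⟨(w:ℕ)-1, by omega⟩ : Fin (n+1)):ℕ)) ≤ (x:ℕ) by simp; omega),
          pathPhi_le (show (((⟨(w:ℕ)+1, by omega⟩ : Fin (n+1)):ℕ)) ≤ (x:ℕ) by simp; omega),
          pathPhi_le (show (w:ℕ) ≤ (x:ℕ) by omega)]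
        simp only [Fin.val_mk]
        push_cast [Nat.cast_sub (show 1 ≤ (w:ℕ) by omega)]
        ring
      · rw [pathPhi_ge (show (x:ℕ) ≤ (((⟨(w:ℕ)-1, by omega⟩ : Fin (n+1)):ℕ)) by simp; omega),
          pathPhi_ge (show (x:ℕ) ≤ (((⟨(w:ℕ)+1, by omega⟩ : Fin (n+1)):ℕ)) by simp; omega),
          pathPhi_ge (show (x:ℕ) ≤ (w:ℕ) by omega)]
        simp only [Fin.val_mk]
        push_cast [Nat.cast_sub (show 1 ≤ (w:ℕ) by omega)]
        ring

lemma pathG_hitTime {n : ℕ} (hn : 1 ≤ n) (r x : Fin (n+1)) :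
    (pathG n).hitTime r x = pathPhi n x r := by
  refine (pathG n).hitTime_eq_of_potential x (pathPhi n x) (pathG_degree_pos hn)
    (pathPhi_self x) (pathPhi_nonneg x) (pathPhi_harm hn x) n hn
    (1 - (1/2:ℝ)^n) ?_ ?_ ?_ r
  · have : (1/2:ℝ)^n ≤ 1 := by apply pow_le_one₀ <;> norm_num
    linarith
  · have : (0:ℝ) < (1/2:ℝ)^n := by positivity
    linarith
  · intro w
    refine pathG_avoid_bound hn x n w ?_
    have := w.isLt
    have := x.isLt
    simp only [Nat.dist]
    omega

lemma sum_range_cast_sq (m : ℕ) :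
    ∑ k ∈ Finset.range m, ((k:ℝ))^2 = (m:ℝ)*((m:ℝ)-1)*(2*(m:ℝ)-1)/6 := by
  induction m with
  | zero => simp
  | succ m ih => rw [Finset.sum_range_succ, ih]; push_cast; ring

lemma sum_range_cast_id (m : ℕ) :
    ∑ k ∈ Finset.range m, ((k:ℝ)) = (m:ℝ)*((m:ℝ)-1)/2 := by
  induction m with
  | zero => simp
  | succ m ih => rw [Finset.sum_range_succ, ih]; push_cast; ring


/-- The sum of hitting times on the path: `∑ₖ H_r(k) = n(n+1)(2n+1)/6 + r(n-r)`. -/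
theorem path_sum_hitTime (n : ℕ) (r : Fin (n+1)) :
    ∑ k : Fin (n+1), (pathG n).hitTime r k =
      (n : ℝ) * ((n : ℝ) + 1) * (2 * (n : ℝ) + 1) / 6
        + ((r : ℕ) : ℝ) * ((n : ℝ) - ((r : ℕ) : ℝ)) := by
  by_cases hn : 1 ≤ n
  · have h1 : ∑ k : Fin (n+1), (pathG n).hitTime r k = ∑ k : Fin (n+1), pathPhi n k r :=
      Finset.sum_congr rfl fun k _ => pathG_hitTime hn r k
    set ρ : ℕ := (r:ℕ) with hρdef
    have hρ : ρ ≤ n := by have := r.isLt; omega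
    have h2 : ∑ k : Fin (n+1), pathPhi n k r
        = ∑ k ∈ Finset.range (n+1), (if ρ ≤ k then (k:ℝ)^2 - (ρ:ℝ)^2
            else ((n:ℝ)-(k:ℝ))^2 - ((n:ℝ)-(ρ:ℝ))^2) := by
      rw [← Fin.sum_univ_eq_sum_range
        (fun k => if ρ ≤ k then (k:ℝ)^2 - (ρ:ℝ)^2
            else ((n:ℝ)-(k:ℝ))^2 - ((n:ℝ)-(ρ:ℝ))^2) (n+1)]
      exact Finset.sum_congr rfl fun k _ => rfl
    rw [h1, h2, Finset.range_eq_Ico,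
      ← Finset.sum_Ico_consecutive _ (Nat.zero_le ρ) (by omega : ρ ≤ n+1)]
    have hA : ∑ k ∈ Finset.Ico 0 ρ, (if ρ ≤ k then (k:ℝ)^2 - (ρ:ℝ)^2
            else ((n:ℝ)-(k:ℝ))^2 - ((n:ℝ)-(ρ:ℝ))^2)
        = ∑ k ∈ Finset.range ρ, (((n:ℝ)-(k:ℝ))^2 - ((n:ℝ)-(ρ:ℝ))^2) := by
      rw [← Finset.range_eq_Ico]
      refine Finset.sum_congr rfl fun k hk => ?_
      rw [if_neg]
      exact fun h => by have := Finset.mem_range.mp hk; omega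
    have hB : ∑ k ∈ Finset.Ico ρ (n+1), (if ρ ≤ k then (k:ℝ)^2 - (ρ:ℝ)^2
            else ((n:ℝ)-(k:ℝ))^2 - ((n:ℝ)-(ρ:ℝ))^2)
        = ∑ k ∈ Finset.Ico ρ (n+1), ((k:ℝ)^2 - (ρ:ℝ)^2) := by
      refine Finset.sum_congr rfl fun k hk => ?_
      rw [if_pos (Finset.mem_Ico.mp hk).1]
    rw [hA, hB]
    have eA : ∑ k ∈ Finset.range ρ, (((n:ℝ)-(k:ℝ))^2 - ((n:ℝ)-(ρ:ℝ))^2)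
        = (ρ:ℝ) * ((n:ℝ)^2 - ((n:ℝ)-(ρ:ℝ))^2) - 2*(n:ℝ)*((ρ:ℝ)*((ρ:ℝ)-1)/2)
          + (ρ:ℝ)*((ρ:ℝ)-1)*(2*(ρ:ℝ)-1)/6 := by
      have hexp : ∀ k:ℕ, ((n:ℝ)-(k:ℝ))^2 - ((n:ℝ)-(ρ:ℝ))^2
          = ((n:ℝ)^2 - ((n:ℝ)-(ρ:ℝ))^2) + (-(2*(n:ℝ)))*(k:ℝ) + (k:ℝ)^2 := fun k => by ring
      simp_rw [hexp]
      rw [Finset.sum_add_distrib, Finset.sum_add_distrib, Finset.sum_const, ← Finset.mul_sum,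
        sum_range_cast_id, sum_range_cast_sq, Finset.card_range, nsmul_eq_mul]
      ring
    have e1 : ∀ m:ℕ, ∑ k ∈ Finset.range m, ((k:ℝ)^2 - (ρ:ℝ)^2)
        = (m:ℝ)*((m:ℝ)-1)*(2*(m:ℝ)-1)/6 - (m:ℝ)*(ρ:ℝ)^2 := by
      intro m
      rw [Finset.sum_sub_distrib, sum_range_cast_sq, Finset.sum_const, Finset.card_range,
        nsmul_eq_mul]
    have eB : ∑ k ∈ Finset.Ico ρ (n+1), ((k:ℝ)^2 - (ρ:ℝ)^2)
        = ((((n:ℕ)+1:ℕ):ℝ)*((((n:ℕ)+1:ℕ):ℝ)-1)*(2*(((n:ℕ)+1:ℕ):ℝ)-1)/6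
            - (((n:ℕ)+1:ℕ):ℝ)*(ρ:ℝ)^2)
          - ((ρ:ℝ)*((ρ:ℝ)-1)*(2*(ρ:ℝ)-1)/6 - (ρ:ℝ)*(ρ:ℝ)^2) := by
      rw [Finset.sum_Ico_eq_sub _ (by omega : ρ ≤ n+1), e1, e1]
    rw [eA, eB]
    push_cast
    ring
  · have h0 : n = 0 := by omega
    subst h0
    have hr : r = 0 := Fin.ext (by have := r.isLt; omega)
    rw [Fin.sum_univ_one, hr, (pathG 0).hitTime_self 0]
    norm_num
end

section
/- For the path P_n with vertices 0,...,n, the cover cost cc_r(P_n) equals (n+1)(2n+1)/6 + r(n-r)/n. -/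
open Finset

variable {V : Type*} [Fintype V] [DecidableEq V]

set_option linter.unusedSectionVars false
set_option linter.unusedVariables false
set_option maxHeartbeats 1000000
namespace RW
open Finset
variable {V : Type*} [Fintype V] [DecidableEq V] (G : SimpleGraph V) [DecidableRel G.Adj]

lemma step_nonneg (x y : V) : 0 ≤ G.step x y := by
  unfold SimpleGraph.step; split <;> positivity

lemma step_sum (x : V) : ∑ y, G.step x y = if 0 < G.degree x then 1 else 0 := by
  unfold SimpleGraph.step
  rw [← Finset.sum_filter, ← SimpleGraph.neighborFinset_eq_filter, Finset.sum_const,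
    ← SimpleGraph.degree, nsmul_eq_mul]
  rcases Nat.eq_zero_or_pos (G.degree x) with h | h
  · simp [h]
  · rw [if_pos h, mul_inv_cancel₀ (by exact_mod_cast h.ne')]

lemma step_sum_le (x : V) : ∑ y, G.step x y ≤ 1 := by
  rw [step_sum]; split <;> norm_num

lemma avoid_zero (x z w : V) :
    G.avoidProb x 0 z w = if z = x then 0 else if z = w then 1 else 0 := rfl

lemma avoid_succ (x : V) (t : ℕ) (z w : V) :
    G.avoidProb x (t+1) z w =
      if z = x then 0 else ∑ u, G.step z u * G.avoidProb x t u w := rfl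

lemma avoid_nonneg (x : V) : ∀ (t : ℕ) (z w : V), 0 ≤ G.avoidProb x t z w := by
  intro t
  induction t with
  | zero =>
      intro z w; rw [avoid_zero]
      split
      · exact le_refl 0
      · split <;> norm_num
  | succ t ih =>
      intro z w; rw [avoid_succ]
      split
      · exact le_refl 0
      · exact Finset.sum_nonneg fun u _ => mul_nonneg (step_nonneg G z u) (ih u w)

lemma avoid_at_avoided (x : V) : ∀ (t : ℕ) (z : V), G.avoidProb x t z x = 0 := by
  intro t
  induction t with
  | zero =>
      intro z; rw [avoid_zero]
      by_cases h : z = x <;> simp [h]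
  | succ t ih =>
      intro z; rw [avoid_succ]
      split
      · rfl
      · exact Finset.sum_eq_zero fun u _ => by rw [ih u, mul_zero]

lemma avoid_from_avoided (x : V) (t : ℕ) (w : V) : G.avoidProb x t x w = 0 := by
  cases t with
  | zero => rw [avoid_zero, if_pos rfl]
  | succ t => rw [avoid_succ, if_pos rfl]

/-- last-step recurrence -/
lemma avoid_succ' (x : V) : ∀ (t : ℕ) (z w : V),
    G.avoidProb x (t+1) z w =
      if w = x then 0 else ∑ v, G.avoidProb x t z v * G.step v w := by
  have h0 : ∀ u w : V, G.avoidProb x 0 u w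
      = (if u = w then (if w = x then (0:ℝ) else 1) else 0) := by
    intro u w
    rw [avoid_zero]
    by_cases h1 : u = w <;> by_cases h2 : u = x <;> simp_all
  intro t
  induction t with
  | zero =>
      intro z w
      rw [avoid_succ]
      simp only [h0, mul_ite, mul_zero, mul_one, ite_mul, zero_mul, one_mul,
        Finset.sum_ite_eq, Finset.sum_ite_eq', Finset.mem_univ, if_true]
      by_cases hz : z = x <;> by_cases hw : w = x <;> simp [hz, hw]
  | succ t ih =>
      intro z w
      rw [avoid_succ]
      by_cases hz : z = x
      · subst hz
        rw [if_pos rfl]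
        split
        · rfl
        · symm
          refine Finset.sum_eq_zero fun v _ => ?_
          rw [avoid_from_avoided, zero_mul]
      · rw [if_neg hz]
        by_cases hw : w = x
        · rw [if_pos hw]
          refine Finset.sum_eq_zero fun u _ => ?_
          rw [ih, if_pos hw, mul_zero]
        · rw [if_neg hw]
          calc ∑ u, G.step z u * G.avoidProb x (t+1) u w
              = ∑ u, ∑ v, G.step z u * (G.avoidProb x t u v * G.step v w) := by
                refine Finset.sum_congr rfl fun u _ => ?_
                rw [ih, if_neg hw, Finset.mul_sum]
            _ = ∑ v, (∑ u, G.step z u * G.avoidProb x t u v) * G.step v w := by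
                rw [Finset.sum_comm]
                refine Finset.sum_congr rfl fun v _ => ?_
                rw [Finset.sum_mul]
                exact Finset.sum_congr rfl fun u _ => by ring
            _ = ∑ v, G.avoidProb x (t+1) z v * G.step v w := by
                refine Finset.sum_congr rfl fun v _ => ?_
                rw [avoid_succ, if_neg hz]

/-- total avoiding probability -/
noncomputable def A (x : V) (t : ℕ) (z : V) : ℝ := ∑ w, G.avoidProb x t z w

lemma A_zero (x z : V) : A G x 0 z = if z = x then 0 else 1 := by
  unfold A
  simp only [avoid_zero]
  by_cases h : z = x <;> simp [h]

lemma A_succ (x : V) (t : ℕ) (z : V) :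
    A G x (t+1) z = if z = x then 0 else ∑ w, G.step z w * A G x t w := by
  unfold A
  simp only [avoid_succ]
  by_cases h : z = x
  · simp [h]
  · simp only [h, if_false, Finset.mul_sum]
    rw [Finset.sum_comm]

lemma A_nonneg (x : V) (t : ℕ) (z : V) : 0 ≤ A G x t z :=
  Finset.sum_nonneg fun w _ => avoid_nonneg G x t z w

lemma A_le_one (x : V) : ∀ (t : ℕ) (z : V), A G x t z ≤ 1 := by
  intro t
  induction t with
  | zero => intro z; rw [A_zero]; split <;> norm_num
  | succ t ih =>
      intro z
      rw [A_succ]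
      split
      · norm_num
      · calc ∑ w, G.step z w * A G x t w ≤ ∑ w, G.step z w * 1 :=
              Finset.sum_le_sum fun w _ =>
                mul_le_mul_of_nonneg_left (ih w) (step_nonneg G z w)
          _ ≤ 1 := by simpa using step_sum_le G z

lemma A_at (x : V) (t : ℕ) : A G x t x = 0 := by
  cases t with
  | zero => rw [A_zero, if_pos rfl]
  | succ t => rw [A_succ, if_pos rfl]

lemma A_mono (x : V) : ∀ (t : ℕ) (z : V), A G x (t+1) z ≤ A G x t z := by
  intro t
  induction t with
  | zero =>
      intro z
      by_cases h : z = x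
      · subst h; rw [A_at, A_at]
      · rw [A_zero, if_neg h]
        exact A_le_one G x 1 z
  | succ t ih =>
      intro z
      rw [A_succ, A_succ]
      split
      · exact le_refl _
      · exact Finset.sum_le_sum fun w _ =>
          mul_le_mul_of_nonneg_left (ih w) (step_nonneg G z w)

lemma A_le_of_le (x : V) {s t : ℕ} (h : s ≤ t) (z : V) : A G x t z ≤ A G x s z := by
  induction t with
  | zero => rw [Nat.le_zero.mp h]
  | succ t ih =>
      rcases Nat.lt_or_ge s (t+1) with h' | h'
      · exact (A_mono G x t z).trans (ih (Nat.lt_succ_iff.mp h'))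
      · rw [le_antisymm h h']

/-- decomposition A (t+s) z = ∑ v, avoid t z v * A s v -/
lemma A_add (x : V) : ∀ (t s : ℕ) (z : V),
    A G x (t + s) z = ∑ v, G.avoidProb x t z v * A G x s v := by
  intro t
  induction t with
  | zero =>
      intro s z
      rw [Nat.zero_add]
      simp only [avoid_zero]
      by_cases h : z = x
      · subst h; simp [A_at]
      · simp [h]
  | succ t ih =>
      intro s z
      have e : t + 1 + s = t + s + 1 := by omega
      by_cases h : z = x
      · subst h
        rw [e, A_at]
        symm
        exact Finset.sum_eq_zero fun v _ => by rw [avoid_from_avoided, zero_mul]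
      · rw [e, A_succ, if_neg h]
        calc ∑ w, G.step z w * A G x (t+s) w
            = ∑ w, ∑ v, G.step z w * (G.avoidProb x t w v * A G x s v) := by
              refine Finset.sum_congr rfl fun w _ => ?_
              rw [ih, Finset.mul_sum]
          _ = ∑ v, (∑ w, G.step z w * G.avoidProb x t w v) * A G x s v := by
              rw [Finset.sum_comm]
              refine Finset.sum_congr rfl fun v _ => ?_
              rw [Finset.sum_mul]
              exact Finset.sum_congr rfl fun w _ => by ring
          _ = ∑ v, G.avoidProb x (t+1) z v * A G x s v := by
              refine Finset.sum_congr rfl fun v _ => ?_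
              rw [avoid_succ, if_neg h]

section Contract
variable {V : Type*} [Fintype V] [DecidableEq V] (G : SimpleGraph V) [DecidableRel G.Adj]
variable {x : V} {m : ℕ} {ε : ℝ}

lemma A_pow (hm : 0 < m) (hε1 : ε ≤ 1) (hA : ∀ z, A G x m z ≤ 1 - ε) :
    ∀ (q : ℕ) (z : V), A G x (q * m) z ≤ (1 - ε) ^ q := by
  intro q
  induction q with
  | zero => intro z; simpa using A_le_one G x 0 z
  | succ q ih =>
      intro z
      have e : (q + 1) * m = q * m + m := by ring
      rw [e, A_add, pow_succ]
      calc ∑ v, G.avoidProb x (q*m) z v * A G x m v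
          ≤ ∑ v, G.avoidProb x (q*m) z v * (1 - ε) :=
            Finset.sum_le_sum fun v _ =>
              mul_le_mul_of_nonneg_left (hA v) (avoid_nonneg G x _ z v)
        _ = A G x (q*m) z * (1 - ε) := by rw [← Finset.sum_mul]; rfl
        _ ≤ (1-ε)^q * (1-ε) :=
            mul_le_mul_of_nonneg_right (ih z) (by linarith)

lemma A_bound (hm : 0 < m) (hε1 : ε ≤ 1) (hA : ∀ z, A G x m z ≤ 1 - ε)
    (t : ℕ) (z : V) : A G x t z ≤ (1 - ε) ^ (t / m) := by
  calc A G x t z ≤ A G x (t / m * m) z :=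
        A_le_of_le G x (Nat.div_mul_le_self t m) z
    _ ≤ (1 - ε) ^ (t / m) := A_pow G hm hε1 hA _ z

lemma A_summable (hm : 0 < m) (hε0 : 0 < ε) (hε1 : ε ≤ 1)
    (hA : ∀ z, A G x m z ≤ 1 - ε) (z : V) :
    Summable (fun t => A G x t z) := by
  have hr0 : (0:ℝ) ≤ 1 - ε := by linarith
  have hr1 : (1:ℝ) - ε < 1 := by linarith
  have key : ∀ N : ℕ, ∑ t ∈ Finset.range (N * m), (1-ε) ^ (t / m)
      = (m : ℝ) * ∑ q ∈ Finset.range N, (1-ε) ^ q := by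
    intro N
    induction N with
    | zero => simp
    | succ N ih =>
        have e : (N + 1) * m = N * m + m := by ring
        rw [e, ← Finset.sum_range_add_sum_Ico _ (Nat.le_add_right (N*m) m), ih,
          Finset.sum_Ico_eq_sum_range]
        have : ∀ i ∈ Finset.range (N*m + m - N*m), (1-ε : ℝ) ^ ((N*m + i) / m) = (1-ε)^N := by
          intro i hi
          simp only [Nat.add_sub_cancel_left, Finset.mem_range] at hi
          rw [Nat.mul_comm N m, Nat.mul_add_div hm, Nat.div_eq_of_lt hi, Nat.add_zero]
        rw [Finset.sum_congr rfl this, Finset.sum_const]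
        simp only [Nat.add_sub_cancel_left, Finset.sum_range_succ, Finset.card_range, nsmul_eq_mul]
        push_cast
        ring
  apply summable_of_sum_range_le (c := (m : ℝ) * (1 - (1-ε))⁻¹)
    (fun t => A_nonneg G x t z)
  intro K
  calc ∑ t ∈ Finset.range K, A G x t z
      ≤ ∑ t ∈ Finset.range K, (1-ε) ^ (t/m) :=
        Finset.sum_le_sum fun t _ => A_bound G hm hε1 hA t z
    _ ≤ ∑ t ∈ Finset.range (K * m), (1-ε) ^ (t/m) := by
        apply Finset.sum_le_sum_of_subset_of_nonneg
        · exact Finset.range_subset_range.mpr (Nat.le_mul_of_pos_right K hm)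
        · intro i _ _; positivity
    _ = (m : ℝ) * ∑ q ∈ Finset.range K, (1-ε)^q := key K
    _ ≤ (m : ℝ) * (1 - (1-ε))⁻¹ := by
        apply mul_le_mul_of_nonneg_left _ (by positivity)
        exact Summable.sum_le_tsum _ (fun i _ => by positivity)
          (summable_geometric_of_lt_one hr0 hr1) |>.trans
          (le_of_eq (tsum_geometric_of_lt_one hr0 hr1))

end Contract
section Hfun
variable {V : Type*} [Fintype V] [DecidableEq V] (G : SimpleGraph V) [DecidableRel G.Adj]

/-- expected time to hit x from z (as a tsum of survival probabilities) -/
noncomputable def hfun (x z : V) : ℝ := ∑' t, A G x t z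

variable {x : V} {m : ℕ} {ε : ℝ}

lemma hfun_at (x : V) : hfun G x x = 0 := by
  unfold hfun
  simp [A_at]

lemma hfun_eq (hm : 0 < m) (hε0 : 0 < ε) (hε1 : ε ≤ 1)
    (hA : ∀ z, A G x m z ≤ 1 - ε) {z : V} (hz : z ≠ x) :
    hfun G x z = 1 + ∑ w, G.step z w * hfun G x w := by
  have hs : ∀ w, Summable (fun t => A G x t w) := A_summable G hm hε0 hε1 hA
  unfold hfun
  rw [Summable.tsum_eq_zero_add (hs z), A_zero, if_neg hz]
  congr 1
  calc ∑' t, A G x (t+1) z = ∑' t, ∑ w, G.step z w * A G x t w := by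
        refine tsum_congr fun t => ?_
        rw [A_succ, if_neg hz]
    _ = ∑ w, ∑' t, G.step z w * A G x t w :=
        Summable.tsum_finsetSum fun w _ => (hs w).mul_left _
    _ = ∑ w, G.step z w * ∑' t, A G x t w :=
        Finset.sum_congr rfl fun w _ => tsum_mul_left

lemma hfun_unique (hm : 0 < m) (hε0 : 0 < ε) (hε1 : ε ≤ 1)
    (hA : ∀ z, A G x m z ≤ 1 - ε) (f : V → ℝ) (hfx : f x = 0)
    (hf : ∀ z, z ≠ x → f z = 1 + ∑ w, G.step z w * f w) (z : V) :
    hfun G x z = f z := by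
  set d : V → ℝ := fun z => hfun G x z - f z with hd
  have hdx : d x = 0 := by simp [hd, hfun_at, hfx]
  have hdz : ∀ z, z ≠ x → d z = ∑ w, G.step z w * d w := by
    intro z hz
    simp only [hd]
    rw [hfun_eq G hm hε0 hε1 hA hz, hf z hz]
    have : ∑ w, G.step z w * (hfun G x w - f w)
        = ∑ w, (G.step z w * hfun G x w - G.step z w * f w) :=
      Finset.sum_congr rfl fun w _ => by ring
    rw [this, Finset.sum_sub_distrib]
    ring
  have claim : ∀ (t : ℕ) (z : V), d z = ∑ w, G.avoidProb x t z w * d w := by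
    intro t
    induction t with
    | zero =>
        intro z
        by_cases h : z = x
        · subst h
          rw [hdx]
          symm
          exact Finset.sum_eq_zero fun w _ => by rw [avoid_from_avoided, zero_mul]
        · symm
          calc ∑ w, G.avoidProb x 0 z w * d w
              = ∑ w, (if z = w then 1 else 0) * d w := by
                refine Finset.sum_congr rfl fun w _ => ?_
                rw [avoid_zero, if_neg h]
            _ = d z := by simp
    | succ t ih =>
        intro z
        by_cases h : z = x
        · subst h
          rw [hdx]
          symm
          exact Finset.sum_eq_zero fun w _ => by rw [avoid_from_avoided, zero_mul]
        · calc d z = ∑ u, G.step z u * d u := hdz z h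
            _ = ∑ u, ∑ w, G.step z u * (G.avoidProb x t u w * d w) := by
                refine Finset.sum_congr rfl fun u _ => ?_
                rw [ih u, Finset.mul_sum]
            _ = ∑ w, (∑ u, G.step z u * G.avoidProb x t u w) * d w := by
                rw [Finset.sum_comm]
                refine Finset.sum_congr rfl fun w _ => ?_
                rw [Finset.sum_mul]
                exact Finset.sum_congr rfl fun u _ => by ring
            _ = ∑ w, G.avoidProb x (t+1) z w * d w := by
                refine Finset.sum_congr rfl fun w _ => ?_
                rw [avoid_succ, if_neg h]
  set M : ℝ := ∑ w, |d w| with hM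
  have hM0 : 0 ≤ M := Finset.sum_nonneg fun w _ => abs_nonneg _
  have bound : ∀ q : ℕ, |d z| ≤ (1-ε)^q * M := by
    intro q
    calc |d z| = |∑ w, G.avoidProb x (q*m) z w * d w| := by rw [← claim]
      _ ≤ ∑ w, |G.avoidProb x (q*m) z w * d w| := Finset.abs_sum_le_sum_abs _ _
      _ ≤ ∑ w, A G x (q*m) z * |d w| := by
          refine Finset.sum_le_sum fun w _ => ?_
          rw [abs_mul, abs_of_nonneg (avoid_nonneg G x _ z w)]
          refine mul_le_mul_of_nonneg_right ?_ (abs_nonneg _)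
          exact Finset.single_le_sum (f := fun w => G.avoidProb x (q*m) z w)
            (fun w _ => avoid_nonneg G x _ z w) (Finset.mem_univ w)
      _ = A G x (q*m) z * M := by rw [← Finset.mul_sum]
      _ ≤ (1-ε)^q * M :=
          mul_le_mul_of_nonneg_right (A_pow G hm hε1 hA q z) hM0
  have lim : Filter.Tendsto (fun q : ℕ => (1-ε)^q * M) Filter.atTop (nhds 0) := by
    have h1 : |1 - ε| < 1 := by rw [abs_lt]; constructor <;> linarith
    simpa using (tendsto_pow_atTop_nhds_zero_of_abs_lt_one h1).mul_const M
  have : |d z| ≤ 0 := ge_of_tendsto' lim bound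
  have : d z = 0 := abs_eq_zero.mp (le_antisymm this (abs_nonneg _))
  simpa [hd, sub_eq_zero] using this

end Hfun
section Cover
variable {V : Type*} [Fintype V] [DecidableEq V] (G : SimpleGraph V) [DecidableRel G.Adj]

lemma coverDist_zero (r : V) (p : V × Finset V) :
    G.coverDist r 0 p = if p = (r, {r}) then 1 else 0 := rfl

lemma coverDist_succ (r : V) (t : ℕ) (p : V × Finset V) :
    G.coverDist r (t+1) p = ∑ q : V × Finset V,
      (if p.2 = insert p.1 q.2 then G.step q.1 p.1 else 0) * G.coverDist r t q := rfl

lemma coverDist_root_mem (r : V) : ∀ (t : ℕ) (p : V × Finset V),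
    G.coverDist r t p ≠ 0 → r ∈ p.2 := by
  intro t
  induction t with
  | zero =>
      intro p hp
      rw [coverDist_zero] at hp
      by_cases h : p = (r, {r})
      · rw [h]; exact Finset.mem_singleton_self r
      · rw [if_neg h] at hp; exact absurd rfl hp
  | succ t ih =>
      intro p hp
      rw [coverDist_succ] at hp
      obtain ⟨q, -, hq⟩ := Finset.exists_ne_zero_of_sum_ne_zero hp
      by_cases h : p.2 = insert p.1 q.2
      · rw [h]
        exact Finset.mem_insert_of_mem (ih q (by
          intro h0
          rw [h0, mul_zero] at hq
          exact hq rfl))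
      · rw [if_neg h, zero_mul] at hq
        exact absurd rfl hq

lemma coverDist_marginal (r x : V) (hx : x ≠ r) : ∀ (t : ℕ) (w : V),
    (∑ S : Finset V, if x ∈ S then 0 else G.coverDist r t (w, S))
      = G.avoidProb x t r w := by
  intro t
  induction t with
  | zero =>
      intro w
      rw [avoid_zero, if_neg (Ne.symm hx)]
      have : ∀ S : Finset V, (if x ∈ S then (0:ℝ) else G.coverDist r 0 (w, S))
          = if S = {r} then (if x ∈ S then 0 else if w = r then 1 else 0) else 0 := by
        intro S
        rw [coverDist_zero]
        by_cases hS : S = {r} <;> by_cases hxS : x ∈ S <;>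
          simp [hS, hxS, Prod.ext_iff, eq_comm]
      rw [Finset.sum_congr rfl fun S _ => this S, Finset.sum_ite_eq' Finset.univ ({r} : Finset V)]
      simp [Finset.mem_singleton, Ne.symm hx, eq_comm]
  | succ t ih =>
      intro w
      rw [avoid_succ' G x t, ]
      calc (∑ S : Finset V, if x ∈ S then 0 else G.coverDist r (t+1) (w, S))
          = ∑ S : Finset V, ∑ q : V × Finset V,
              (if x ∈ S then 0 else
                (if S = insert w q.2 then G.step q.1 w else 0) * G.coverDist r t q) := by
            refine Finset.sum_congr rfl fun S _ => ?_
            rw [coverDist_succ]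
            split
            · exact (Finset.sum_eq_zero fun q _ => by simp_all).symm
            · rfl
        _ = ∑ q : V × Finset V,
              (if x ∈ insert w q.2 then 0 else G.step q.1 w * G.coverDist r t q) := by
            rw [Finset.sum_comm]
            refine Finset.sum_congr rfl fun q _ => ?_
            have : ∀ S : Finset V, (if x ∈ S then (0:ℝ) else
                (if S = insert w q.2 then G.step q.1 w else 0) * G.coverDist r t q)
                = if S = insert w q.2 then
                    (if x ∈ insert w q.2 then 0 else G.step q.1 w * G.coverDist r t q)
                  else 0 := by
              intro S
              by_cases hS : S = insert w q.2 <;> by_cases hxS : x ∈ S <;> simp_all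
            rw [Finset.sum_congr rfl fun S _ => this S,
              Finset.sum_ite_eq' Finset.univ (insert w q.2)]
            simp
        _ = if w = x then 0 else ∑ v, G.avoidProb x t r v * G.step v w := by
            by_cases hw : w = x
            · rw [if_pos hw]
              refine Finset.sum_eq_zero fun q _ => ?_
              rw [if_pos (by rw [hw]; exact Finset.mem_insert_self x q.2)]
            · rw [if_neg hw]
              rw [Fintype.sum_prod_type]
              calc ∑ v, ∑ S : Finset V,
                    (if x ∈ insert w S then 0 else G.step v w * G.coverDist r t (v, S))
                  = ∑ v, G.step v w * ∑ S : Finset V,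
                      (if x ∈ S then 0 else G.coverDist r t (v, S)) := by
                    refine Finset.sum_congr rfl fun v _ => ?_
                    rw [Finset.mul_sum]
                    refine Finset.sum_congr rfl fun S _ => ?_
                    have hxw : ¬ x = w := fun h => hw h.symm
                    by_cases hxS : x ∈ S <;> simp [Finset.mem_insert, hxS, hxw]
                  _ = ∑ v, G.avoidProb x t r v * G.step v w :=
                    Finset.sum_congr rfl fun v _ => by rw [ih v]; ring

end Cover
section CoverCost
open Finset
variable {V : Type*} [Fintype V] [DecidableEq V] (G : SimpleGraph V) [DecidableRel G.Adj]

lemma A_as_cover (r x : V) (hx : x ≠ r) (t : ℕ) :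
    A G x t r = ∑ p : V × Finset V, (if x ∈ p.2 then 0 else G.coverDist r t p) := by
  unfold A
  rw [Fintype.sum_prod_type]
  exact Finset.sum_congr rfl fun w _ => (coverDist_marginal G r x hx t w).symm

lemma coverCost_term (r : V) (t : ℕ) :
    (∑ p : V × Finset V, if p.2 ≠ Finset.univ then
        G.coverDist r t p * (1 - ((p.2.erase r).card : ℝ) / ((Fintype.card V : ℝ) - 1))
      else 0)
    = ((Fintype.card V : ℝ) - 1)⁻¹ * ∑ x ∈ Finset.univ.erase r, A G x t r := by
  have hrhs : ((Fintype.card V : ℝ) - 1)⁻¹ * ∑ x ∈ Finset.univ.erase r, A G x t r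
      = ∑ p : V × Finset V, G.coverDist r t p *
          (((Fintype.card V : ℝ) - 1)⁻¹ *
            ∑ x ∈ Finset.univ.erase r, (if x ∈ p.2 then 0 else 1)) := by
    rw [Finset.mul_sum]
    rw [Finset.sum_congr rfl fun x hx =>
      congrArg (_ * ·) (A_as_cover G r x (Finset.mem_erase.mp hx).1 t)]
    simp only [Finset.mul_sum]
    rw [Finset.sum_comm]
    refine Finset.sum_congr rfl fun p _ => ?_
    refine Finset.sum_congr rfl fun x _ => ?_
    split <;> ring
  rw [hrhs]
  refine Finset.sum_congr rfl fun p _ => ?_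
  by_cases hd : G.coverDist r t p = 0
  · rw [hd]
    split <;> ring
  have hr : r ∈ p.2 := coverDist_root_mem G r t p hd
  have hcount : ∑ x ∈ Finset.univ.erase r, (if x ∈ p.2 then (0:ℝ) else 1)
      = (((Finset.univ.erase r) \ (p.2.erase r)).card : ℝ) := by
    rw [Finset.sum_ite, Finset.sum_const, Finset.sum_const]
    have : Finset.filter (fun x => ¬ x ∈ p.2) (Finset.univ.erase r)
        = (Finset.univ.erase r) \ (p.2.erase r) := by
      ext x
      simp only [Finset.mem_filter, Finset.mem_erase, Finset.mem_sdiff, Finset.mem_univ,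
        and_true, true_and]
      tauto
    rw [this]
    simp
  by_cases hu : p.2 = Finset.univ
  · rw [if_neg (by simp [hu])]
    rw [hcount, hu, Finset.sdiff_self]
    simp
  · rw [if_pos hu]
    congr 1
    have hsub : p.2.erase r ⊆ Finset.univ.erase r :=
      Finset.erase_subset_erase r (Finset.subset_univ _)
    rw [hcount, Finset.card_sdiff_of_subset hsub]
    have hcard : (Finset.univ.erase r).card = Fintype.card V - 1 := by
      rw [Finset.card_erase_of_mem (Finset.mem_univ r), Finset.card_univ]
    have hle : (p.2.erase r).card ≤ Fintype.card V - 1 := hcard ▸ Finset.card_le_card hsub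
    have hN : 2 ≤ Fintype.card V := by
      have hex : ∃ y, y ∉ p.2 := by
        by_contra h
        push_neg at h
        exact hu (Finset.eq_univ_iff_forall.mpr h)
      obtain ⟨y, hy⟩ := hex
      exact Fintype.one_lt_card_iff_nontrivial.mpr ⟨y, r, fun h => hy (h ▸ hr)⟩
    have hN1 : (0:ℝ) < (Fintype.card V : ℝ) - 1 := by
      have : (2:ℝ) ≤ (Fintype.card V : ℝ) := by exact_mod_cast hN
      linarith
    rw [hcard, Nat.cast_sub hle, Nat.cast_sub (by omega : 1 ≤ Fintype.card V)]
    push_cast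
    field_simp

lemma coverCost_eq (r : V) {m : ℕ} {ε : ℝ} (hm : 0 < m) (hε0 : 0 < ε) (hε1 : ε ≤ 1)
    (hA : ∀ x : V, x ≠ r → ∀ z, A G x m z ≤ 1 - ε) :
    G.coverCost r = ((Fintype.card V : ℝ) - 1)⁻¹ * ∑ x ∈ Finset.univ.erase r, hfun G x r := by
  unfold SimpleGraph.coverCost
  rw [tsum_congr (coverCost_term G r)]
  rw [tsum_mul_left]
  congr 1
  rw [Summable.tsum_finsetSum fun x hx => A_summable G hm hε0 hε1 (hA x (Finset.mem_erase.mp hx).1) r]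
  rfl

end CoverCost
section Path
open Finset

lemma step_mul_sum {V : Type*} [Fintype V] [DecidableEq V] (G : SimpleGraph V)
    [DecidableRel G.Adj] (z : V) (f : V → ℝ) :
    ∑ w, G.step z w * f w = ((G.degree z : ℝ))⁻¹ * ∑ w ∈ G.neighborFinset z, f w := by
  unfold SimpleGraph.step
  rw [Finset.mul_sum, SimpleGraph.neighborFinset_eq_filter, Finset.sum_filter]
  refine Finset.sum_congr rfl fun w _ => ?_
  split <;> simp

variable {n : ℕ}

lemma path_adj (z w : Fin (n+1)) :
    (pathG n).Adj z w ↔ ((z:ℕ) + 1 = w ∨ (w:ℕ) + 1 = z) := Iff.rfl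

lemma path_nbr_zero (hn : 0 < n) (z : Fin (n+1)) (hz : (z:ℕ) = 0) :
    (pathG n).neighborFinset z = {⟨1, by omega⟩} := by
  ext w
  rw [SimpleGraph.mem_neighborFinset, path_adj]
  simp only [Finset.mem_singleton, Fin.ext_iff, hz]
  constructor <;> intro h <;> omega

lemma path_nbr_last (hn : 0 < n) (z : Fin (n+1)) (hz : (z:ℕ) = n) :
    (pathG n).neighborFinset z = {⟨n-1, by omega⟩} := by
  ext w
  rw [SimpleGraph.mem_neighborFinset, path_adj]
  simp [Fin.ext_iff, hz]
  try omega

lemma path_nbr_mid (z : Fin (n+1)) (h0 : 0 < (z:ℕ)) (hn : (z:ℕ) < n) :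
    (pathG n).neighborFinset z = {⟨(z:ℕ)-1, by omega⟩, ⟨(z:ℕ)+1, by omega⟩} := by
  ext w
  rw [SimpleGraph.mem_neighborFinset, path_adj]
  simp [Fin.ext_iff]
  try omega

lemma path_deg_zero (hn : 0 < n) (z : Fin (n+1)) (hz : (z:ℕ) = 0) :
    (pathG n).degree z = 1 := by
  rw [← SimpleGraph.card_neighborFinset_eq_degree, path_nbr_zero hn z hz,
    Finset.card_singleton]

lemma path_deg_last (hn : 0 < n) (z : Fin (n+1)) (hz : (z:ℕ) = n) :
    (pathG n).degree z = 1 := by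
  rw [← SimpleGraph.card_neighborFinset_eq_degree, path_nbr_last hn z hz,
    Finset.card_singleton]

lemma path_deg_mid (z : Fin (n+1)) (h0 : 0 < (z:ℕ)) (hn : (z:ℕ) < n) :
    (pathG n).degree z = 2 := by
  rw [← SimpleGraph.card_neighborFinset_eq_degree, path_nbr_mid z h0 hn]
  rw [Finset.card_insert_of_notMem (by simp [Fin.ext_iff]; try omega), Finset.card_singleton]

lemma path_deg_le (hn : 0 < n) (z : Fin (n+1)) : (pathG n).degree z ≤ 2 := by
  by_cases h0 : (z:ℕ) = 0
  · rw [path_deg_zero hn z h0]; omega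
  by_cases hl : (z:ℕ) = n
  · rw [path_deg_last hn z hl]; omega
  · rw [path_deg_mid z (by omega) (by omega)]

lemma path_step_half (hn : 0 < n) {z w : Fin (n+1)} (h : (pathG n).Adj z w) :
    (1:ℝ)/2 ≤ (pathG n).step z w := by
  unfold SimpleGraph.step
  rw [if_pos h]
  have h2 : (pathG n).degree z ≤ 2 := path_deg_le hn z
  have h1 : 0 < (pathG n).degree z := by
    rw [← SimpleGraph.card_neighborFinset_eq_degree, Finset.card_pos]
    exact ⟨w, SimpleGraph.mem_neighborFinset _ _ _ |>.mpr h⟩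
  rcases (by omega : (pathG n).degree z = 1 ∨ (pathG n).degree z = 2) with h' | h' <;>
    rw [h'] <;> norm_num

lemma path_step_sum_zero (hn : 0 < n) (z : Fin (n+1)) (hz : (z:ℕ) = 0) (f : Fin (n+1) → ℝ) :
    ∑ w, (pathG n).step z w * f w = f ⟨1, by omega⟩ := by
  rw [step_mul_sum, path_deg_zero hn z hz, path_nbr_zero hn z hz, Finset.sum_singleton]
  norm_num

lemma path_step_sum_last (hn : 0 < n) (z : Fin (n+1)) (hz : (z:ℕ) = n) (f : Fin (n+1) → ℝ) :
    ∑ w, (pathG n).step z w * f w = f ⟨n-1, by omega⟩ := by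
  rw [step_mul_sum, path_deg_last hn z hz, path_nbr_last hn z hz, Finset.sum_singleton]
  norm_num

lemma path_step_sum_mid (z : Fin (n+1)) (h0 : 0 < (z:ℕ)) (hn : (z:ℕ) < n)
    (f : Fin (n+1) → ℝ) :
    ∑ w, (pathG n).step z w * f w
      = (f ⟨(z:ℕ)-1, by omega⟩ + f ⟨(z:ℕ)+1, by omega⟩) / 2 := by
  rw [step_mul_sum, path_deg_mid z h0 hn, path_nbr_mid z h0 hn,
    Finset.sum_insert (by simp [Fin.ext_iff]; try omega), Finset.sum_singleton]
  norm_num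
  try ring

end Path
section PathContract
open Finset
variable {n : ℕ}

lemma path_contract (hn : 0 < n) : ∀ (k : ℕ) (x z : Fin (n+1)),
    (z:ℕ) ≤ (x:ℕ) + k → (x:ℕ) ≤ (z:ℕ) + k →
    A (pathG n) x k z ≤ 1 - (1/2:ℝ)^k := by
  intro k
  induction k with
  | zero =>
      intro x z h1 h2
      have : z = x := Fin.ext (by omega)
      subst this
      rw [A_at]
      norm_num
  | succ k ih =>
      intro x z h1 h2
      by_cases hzx : z = x
      · subst hzx
        rw [A_at]
        have : ((1:ℝ)/2)^(k+1) ≤ 1 := pow_le_one₀ (by norm_num) (by norm_num)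
        linarith
      · have hzx' : (z:ℕ) ≠ (x:ℕ) := fun h => hzx (Fin.ext h)
        have hx' := x.isLt
        have hz' := z.isLt
        rw [A_succ, if_neg hzx]
        set u : ℕ := if (z:ℕ) < (x:ℕ) then (z:ℕ)+1 else (z:ℕ)-1 with hu_def
        have hun : u < n + 1 := by rw [hu_def]; split <;> omega
        set w0 : Fin (n+1) := ⟨u, hun⟩ with hw0_def
        have hadj : (pathG n).Adj z w0 := by
          rw [path_adj]
          show (z:ℕ)+1 = u ∨ u+1 = (z:ℕ)
          rw [hu_def]; split <;> omega
        have hw0b : A (pathG n) x k w0 ≤ 1 - (1/2:ℝ)^k := by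
          apply ih
          · show u ≤ (x:ℕ) + k
            rw [hu_def]; split <;> omega
          · show (x:ℕ) ≤ u + k
            rw [hu_def]; split <;> omega
        have hstep := path_step_half hn hadj
        have hA0 : 0 ≤ A (pathG n) x k w0 := A_nonneg _ _ _ _
        have hsn : 0 ≤ (pathG n).step z w0 := step_nonneg _ _ _
        have hsum : ∑ w, (pathG n).step z w * A (pathG n) x k w
            ≤ (∑ w, (pathG n).step z w)
              - (pathG n).step z w0 * (1 - A (pathG n) x k w0) := by
          rw [← Finset.sum_erase_add _ _ (Finset.mem_univ w0),
              ← Finset.sum_erase_add (f := fun w => (pathG n).step z w) _ (Finset.mem_univ w0)]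
          have h1' : ∑ w ∈ Finset.univ.erase w0, (pathG n).step z w * A (pathG n) x k w
              ≤ ∑ w ∈ Finset.univ.erase w0, (pathG n).step z w :=
            Finset.sum_le_sum fun w _ => by
              have ha := A_le_one (pathG n) x k w
              have hb := A_nonneg (pathG n) x k w
              nlinarith [step_nonneg (pathG n) z w]
          ring_nf
          ring_nf at h1'
          linarith
        have hss := step_sum_le (pathG n) z
        have hprod : (1/2:ℝ) * ((1/2:ℝ)^k)
            ≤ (pathG n).step z w0 * (1 - A (pathG n) x k w0) :=
          mul_le_mul hstep (by linarith) (by positivity) hsn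
        have hps : ((1:ℝ)/2)^(k+1) = (1/2:ℝ) * ((1/2:ℝ)^k) := by ring
        linarith

end PathContract
section Candidate
open Finset
variable {n : ℕ}

/-- candidate hitting time from z to x on the path -/
noncomputable def Hc (n : ℕ) (x z : Fin (n+1)) : ℝ :=
  if (z:ℕ) ≤ (x:ℕ) then ((x:ℕ):ℝ)^2 - ((z:ℕ):ℝ)^2
  else ((n:ℝ) - ((x:ℕ):ℝ))^2 - ((n:ℝ) - ((z:ℕ):ℝ))^2

lemma Hc_at (x : Fin (n+1)) : Hc n x x = 0 := by simp [Hc]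

lemma Hc_eq (hn : 0 < n) (x : Fin (n+1)) : ∀ z : Fin (n+1), z ≠ x →
    Hc n x z = 1 + ∑ w, (pathG n).step z w * Hc n x w := by
  intro z hzx
  have hzx' : (z:ℕ) ≠ (x:ℕ) := fun h => hzx (Fin.ext h)
  have hx' := x.isLt
  have hz' := z.isLt
  by_cases hz0 : (z:ℕ) = 0
  · rw [path_step_sum_zero hn z hz0]
    have hx1 : 1 ≤ (x:ℕ) := by omega
    simp only [Hc]
    rw [if_pos (by omega : (z:ℕ) ≤ (x:ℕ)),
        if_pos (show ((⟨1, by omega⟩ : Fin (n+1)):ℕ) ≤ (x:ℕ) from hx1)]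
    rw [hz0]
    push_cast
    ring
  · by_cases hzn : (z:ℕ) = n
    · rw [path_step_sum_last hn z hzn]
      have hxn : (x:ℕ) < n := by omega
      simp only [Hc]
      rw [if_neg (by omega : ¬ (z:ℕ) ≤ (x:ℕ))]
      rw [hzn]
      by_cases hb : n - 1 ≤ (x:ℕ)
      · have hxe : (x:ℕ) = n - 1 := by omega
        rw [if_pos hb, hxe]
        rw [Nat.cast_sub (by omega : 1 ≤ n)]
        push_cast
        ring
      · rw [if_neg hb, Nat.cast_sub (by omega : 1 ≤ n)]
        push_cast
        ring
    · rw [path_step_sum_mid z (by omega) (by omega)]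
      simp only [Hc]
      by_cases hc0 : (z:ℕ) ≤ (x:ℕ)
      · -- z < x
        have hlt : (z:ℕ) < (x:ℕ) := by omega
        rw [if_pos hc0, if_pos (by omega : (z:ℕ)-1 ≤ (x:ℕ)),
            if_pos (by omega : (z:ℕ)+1 ≤ (x:ℕ)),
            Nat.cast_sub (by omega : 1 ≤ (z:ℕ))]
        push_cast
        ring
      · -- z > x
        have hgt : (x:ℕ) < (z:ℕ) := by omega
        rw [if_neg hc0, if_neg (by omega : ¬ ((z:ℕ)+1 ≤ (x:ℕ)))]
        by_cases hb : (z:ℕ)-1 ≤ (x:ℕ)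
        · have hxe : (x:ℕ) = (z:ℕ) - 1 := by omega
          rw [if_pos hb, hxe, Nat.cast_sub (by omega : 1 ≤ (z:ℕ))]
          push_cast
          ring
        · rw [if_neg hb, Nat.cast_sub (by omega : 1 ≤ (z:ℕ))]
          push_cast
          ring

lemma path_hfun (hn : 0 < n) (x z : Fin (n+1)) :
    hfun (pathG n) x z = Hc n x z := by
  have hA : ∀ w, A (pathG n) x n w ≤ 1 - (1/2:ℝ)^n := fun w =>
    path_contract hn n x w (by omega) (by omega)
  exact hfun_unique (pathG n) hn (by positivity)
    (pow_le_one₀ (by norm_num) (by norm_num)) hA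
    (Hc n x) (Hc_at x) (Hc_eq hn x) z

end Candidate
section Arith
open Finset
variable {n : ℕ}

lemma sumid (m : ℕ) : ∑ j ∈ Finset.range m, ((j:ℕ):ℝ) = (m:ℝ)*((m:ℝ)-1)/2 := by
  induction m with
  | zero => simp
  | succ m ih => rw [Finset.sum_range_succ, ih]; push_cast; ring

lemma sumsq (m : ℕ) : ∑ j ∈ Finset.range m, ((j:ℕ):ℝ)^2
    = (m:ℝ)*((m:ℝ)-1)*(2*(m:ℝ)-1)/6 := by
  induction m with
  | zero => simp
  | succ m ih => rw [Finset.sum_range_succ, ih]; push_cast; ring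

lemma path_T (hn : 0 < n) (r : Fin (n+1)) :
    ∑ x : Fin (n+1), Hc n x r
      = (n:ℝ)*((n:ℝ)+1)*(2*(n:ℝ)+1)/6 + ((r:ℕ):ℝ)*((n:ℝ) - ((r:ℕ):ℝ)) := by
  have hr := r.isLt
  set R : ℝ := ((r:ℕ):ℝ) with hR
  set N : ℝ := (n:ℝ) with hN
  have h1 : ∑ x : Fin (n+1), Hc n x r
      = ∑ j ∈ Finset.range (n+1),
          (if (r:ℕ) ≤ j then ((j:ℕ):ℝ)^2 - R^2 else (N-((j:ℕ):ℝ))^2 - (N-R)^2) := by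
    rw [← Fin.sum_univ_eq_sum_range]
    exact Finset.sum_congr rfl fun x _ => rfl
  rw [h1, Finset.sum_ite]
  have hf1 : Finset.filter (fun j => (r:ℕ) ≤ j) (Finset.range (n+1))
      = Finset.Ico (r:ℕ) (n+1) := by
    ext j; simp [Finset.mem_Ico, Finset.mem_filter, Finset.mem_range]; omega
  have hf2 : Finset.filter (fun j => ¬ (r:ℕ) ≤ j) (Finset.range (n+1))
      = Finset.range (r:ℕ) := by
    ext j; simp [Finset.mem_filter, Finset.mem_range]; omega
  rw [hf1, hf2]
  have hS1 : ∑ j ∈ Finset.Ico (r:ℕ) (n+1), (((j:ℕ):ℝ)^2 - R^2)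
      = (∑ j ∈ Finset.range (n+1), ((j:ℕ):ℝ)^2)
        - (∑ j ∈ Finset.range (r:ℕ), ((j:ℕ):ℝ)^2)
        - ((n+1-(r:ℕ) : ℕ):ℝ) * R^2 := by
    rw [Finset.sum_sub_distrib, Finset.sum_const, Finset.sum_Ico_eq_sub _ (by omega : (r:ℕ) ≤ n+1),
      Nat.card_Ico, nsmul_eq_mul]
    try ring
  have hS2 : ∑ j ∈ Finset.range (r:ℕ), ((N-((j:ℕ):ℝ))^2 - (N-R)^2)
      = ((r:ℕ):ℝ) * (N^2 - (N-R)^2) - 2*N*(∑ j ∈ Finset.range (r:ℕ), ((j:ℕ):ℝ))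
        + (∑ j ∈ Finset.range (r:ℕ), ((j:ℕ):ℝ)^2) := by
    have : ∀ j ∈ Finset.range (r:ℕ), (N-((j:ℕ):ℝ))^2 - (N-R)^2
        = (N^2 - (N-R)^2) - 2*N*((j:ℕ):ℝ) + ((j:ℕ):ℝ)^2 := fun j _ => by ring
    rw [Finset.sum_congr rfl this, Finset.sum_add_distrib, Finset.sum_sub_distrib,
      Finset.sum_const, nsmul_eq_mul, ← Finset.mul_sum, Finset.card_range]
  rw [hS1, hS2, sumid, sumsq, sumsq]
  have hc : ((n+1-(r:ℕ) : ℕ):ℝ) = N + 1 - R := by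
    rw [Nat.cast_sub (by omega)]; push_cast; ring
  rw [hc]
  push_cast
  ring

end Arith

end RW

/-- The cover cost of the path: `cc_r(P_n) = (n+1)(2n+1)/6 + r(n-r)/n`. -/
theorem path_coverCost (n : ℕ) (hn : 0 < n) (r : Fin (n+1)) :
    (pathG n).coverCost r =
      ((n : ℝ) + 1) * (2 * (n : ℝ) + 1) / 6
        + ((r : ℕ) : ℝ) * ((n : ℝ) - ((r : ℕ) : ℝ)) / (n : ℝ) := by
  have h1 := RW.coverCost_eq (pathG n) r (m := n) (ε := (1/2:ℝ)^n) hn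
    (by positivity) (pow_le_one₀ (by norm_num) (by norm_num))
    (fun x _ z => RW.path_contract hn n x z
      (by have := z.isLt; have := x.isLt; omega)
      (by have := z.isLt; have := x.isLt; omega))
  rw [h1]
  have hcard : ((Fintype.card (Fin (n+1)) : ℝ) - 1) = (n:ℝ) := by
    rw [Fintype.card_fin]; push_cast; ring
  rw [hcard]
  rw [Finset.sum_congr rfl fun x _ => RW.path_hfun hn x r]
  have hsplit : ∑ x ∈ Finset.univ.erase r, RW.Hc n x r
      = ∑ x : Fin (n+1), RW.Hc n x r := by
    rw [← Finset.add_sum_erase _ _ (Finset.mem_univ r), RW.Hc_at, zero_add]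
  rw [hsplit, RW.path_T hn r]
  have hn' : (n:ℝ) ≠ 0 := Nat.cast_ne_zero.mpr hn.ne'
  field_simp
end

section
/- For every finite connected graph G on n+1 vertices and every starting vertex r, the cover cost cc_r(G), the cover time CT_r(G), and the Cover Cost CC_r(G) = n\,cc_r(G) satisfy cc_r(G) < CT_r(G) < CC_r(G), provided n \ge 2. -/
open Finset

variable {V : Type*} [Fintype V] [DecidableEq V]

section AuxCC
set_option linter.unusedSectionVars false

namespace CCaux
variable {V : Type*} [Fintype V] [DecidableEq V]

open SimpleGraph in
/-- general cover-process distribution from initial state `q0` -/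
noncomputable def D (G : SimpleGraph V) [DecidableRel G.Adj] (q0 : V × Finset V) :
    ℕ → V × Finset V → ℝ
  | 0, p => if p = q0 then 1 else 0
  | (t+1), p => ∑ q : V × Finset V,
      (if p.2 = insert p.1 q.2 then SimpleGraph.step G q.1 p.1 else 0) * D G q0 t q

variable (G : SimpleGraph V) [DecidableRel G.Adj]

lemma step_nonneg (x y : V) : 0 ≤ SimpleGraph.step G x y := by
  unfold SimpleGraph.step; split <;> positivity

lemma D_nonneg (q0 : V × Finset V) : ∀ t p, 0 ≤ D G q0 t p := by
  intro t
  induction t with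
  | zero => intro p; simp only [D]; split <;> norm_num
  | succ t ih =>
    intro p
    simp only [D]
    refine Finset.sum_nonneg fun q _ => mul_nonneg ?_ (ih q)
    split
    · exact step_nonneg G _ _
    · exact le_rfl

lemma step_sum (hd : ∀ x, 0 < G.degree x) (x : V) : ∑ z, SimpleGraph.step G x z = 1 := by
  unfold SimpleGraph.step
  rw [Finset.sum_ite, Finset.sum_const_zero, add_zero, Finset.sum_const]
  have : (Finset.univ.filter fun z => G.Adj x z) = G.neighborFinset x := by
    ext z; simp [SimpleGraph.mem_neighborFinset]
  rw [this, SimpleGraph.card_neighborFinset_eq_degree, nsmul_eq_mul]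
  exact mul_inv_cancel₀ (Nat.cast_ne_zero.mpr (hd x).ne')


end CCaux

namespace CCaux
variable {V : Type*} [Fintype V] [DecidableEq V]
variable (G : SimpleGraph V) [DecidableRel G.Adj]

lemma kernel_sum (q : V × Finset V) :
    ∑ p : V × Finset V, (if p.2 = insert p.1 q.2 then SimpleGraph.step G q.1 p.1 else 0)
      = ∑ v : V, SimpleGraph.step G q.1 v := by
  rw [Fintype.sum_prod_type]
  refine Finset.sum_congr rfl fun v _ => ?_
  simp

lemma D_sum (hd : ∀ x, 0 < G.degree x) (q0 : V × Finset V) :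
    ∀ t, ∑ p : V × Finset V, D G q0 t p = 1 := by
  intro t
  induction t with
  | zero => simp [D]
  | succ t ih =>
    simp only [D]
    rw [Finset.sum_comm]
    calc ∑ q : V × Finset V, ∑ p : V × Finset V,
          (if p.2 = insert p.1 q.2 then SimpleGraph.step G q.1 p.1 else 0) * D G q0 t q
        = ∑ q : V × Finset V, D G q0 t q := by
          refine Finset.sum_congr rfl fun q _ => ?_
          rw [← Finset.sum_mul, kernel_sum, step_sum G hd, one_mul]
      _ = 1 := ih

lemma D_subset (q0 : V × Finset V) : ∀ t p, D G q0 t p ≠ 0 → q0.2 ⊆ p.2 := by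
  intro t
  induction t with
  | zero =>
    intro p h
    simp only [D] at h
    rcases eq_or_ne p q0 with rfl | hne
    · exact Finset.Subset.refl _
    · simp [hne] at h
  | succ t ih =>
    intro p h
    simp only [D] at h
    obtain ⟨q, -, hq⟩ := Finset.exists_ne_zero_of_sum_ne_zero h
    have h1 : p.2 = insert p.1 q.2 := by by_contra hc; simp [hc] at hq
    have h2 : D G q0 t q ≠ 0 := fun hz => hq (by simp [hz])
    exact (ih q h2).trans (h1 ▸ Finset.subset_insert _ _)

lemma D_mem (q0 : V × Finset V) (h0 : q0.1 ∈ q0.2) :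
    ∀ t p, D G q0 t p ≠ 0 → p.1 ∈ p.2 := by
  intro t
  induction t with
  | zero =>
    intro p h
    rcases eq_or_ne p q0 with rfl | hne
    · exact h0
    · simp [D, hne] at h
  | succ t ih =>
    intro p h
    simp only [D] at h
    obtain ⟨q, -, hq⟩ := Finset.exists_ne_zero_of_sum_ne_zero h
    have h1 : p.2 = insert p.1 q.2 := by by_contra hc; simp [hc] at hq
    rw [h1]; exact Finset.mem_insert_self _ _

lemma D_chapman (q0 : V × Finset V) (s : ℕ) :
    ∀ t p, D G q0 (s + t) p = ∑ q : V × Finset V, D G q0 s q * D G q t p := by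
  intro t
  induction t with
  | zero =>
    intro p
    simp [D, Finset.sum_ite_eq', mul_comm]
  | succ t ih =>
    intro p
    have : s + (t + 1) = (s + t) + 1 := by ring
    rw [this]
    simp only [D]
    calc ∑ q' : V × Finset V,
          (if p.2 = insert p.1 q'.2 then SimpleGraph.step G q'.1 p.1 else 0) * D G q0 (s+t) q'
        = ∑ q' : V × Finset V, (if p.2 = insert p.1 q'.2 then SimpleGraph.step G q'.1 p.1 else 0)
            * ∑ q : V × Finset V, D G q0 s q * D G q t q' := by
          refine Finset.sum_congr rfl fun q' _ => ?_; rw [ih]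
      _ = ∑ q : V × Finset V, D G q0 s q * ∑ q' : V × Finset V,
            (if p.2 = insert p.1 q'.2 then SimpleGraph.step G q'.1 p.1 else 0) * D G q t q' := by
          simp_rw [Finset.mul_sum]
          rw [Finset.sum_comm]
          exact Finset.sum_congr rfl fun q _ => Finset.sum_congr rfl fun q' _ => by ring

end CCaux

namespace CCaux
variable {V : Type*} [Fintype V] [DecidableEq V]
variable (G : SimpleGraph V) [DecidableRel G.Adj]

noncomputable def uncov (q0 : V × Finset V) (t : ℕ) : ℝ :=
  ∑ p : V × Finset V, if p.2 ≠ Finset.univ then D G q0 t p else 0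

lemma uncov_nonneg (q0 : V × Finset V) (t : ℕ) : 0 ≤ uncov G q0 t := by
  refine Finset.sum_nonneg fun p _ => ?_
  split
  · exact D_nonneg G q0 t p
  · exact le_rfl

lemma uncov_le_one (hd : ∀ x, 0 < G.degree x) (q0 : V × Finset V) (t : ℕ) :
    uncov G q0 t ≤ 1 := by
  rw [← D_sum G hd q0 t]
  refine Finset.sum_le_sum fun p _ => ?_
  split
  · exact le_rfl
  · exact D_nonneg G q0 t p

lemma uncov_succ_le (hd : ∀ x, 0 < G.degree x) (q0 : V × Finset V) (t : ℕ) :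
    uncov G q0 (t+1) ≤ uncov G q0 t := by
  unfold uncov
  simp only [D]
  have hsplit : ∀ p : V × Finset V,
      (if p.2 ≠ Finset.univ then
        (∑ q : V × Finset V,
          (if p.2 = insert p.1 q.2 then SimpleGraph.step G q.1 p.1 else 0) * D G q0 t q) else 0)
      = ∑ q : V × Finset V, (if p.2 ≠ Finset.univ then
          (if p.2 = insert p.1 q.2 then SimpleGraph.step G q.1 p.1 else 0) * D G q0 t q else 0) := by
    intro p; split
    · rfl
    · rw [Finset.sum_const_zero]
  simp_rw [hsplit]
  rw [Finset.sum_comm]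
  refine Finset.sum_le_sum fun q _ => ?_
  rcases eq_or_ne q.2 Finset.univ with hq | hq
  · have hz : ∀ p : V × Finset V, (if p.2 ≠ Finset.univ then
          (if p.2 = insert p.1 q.2 then SimpleGraph.step G q.1 p.1 else 0) * D G q0 t q else 0)
        = 0 := by
      intro p
      rcases eq_or_ne p.2 Finset.univ with h1 | h1
      · simp [h1]
      · have h2 : p.2 ≠ insert p.1 q.2 := by rw [hq]; simpa using h1
        simp [h1, h2]
    rw [Finset.sum_eq_zero fun p _ => hz p, if_neg (by simp [hq])]
  · rw [if_pos hq]
    calc ∑ p : V × Finset V, (if p.2 ≠ Finset.univ then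
          (if p.2 = insert p.1 q.2 then SimpleGraph.step G q.1 p.1 else 0) * D G q0 t q else 0)
        ≤ ∑ p : V × Finset V,
          (if p.2 = insert p.1 q.2 then SimpleGraph.step G q.1 p.1 else 0) * D G q0 t q := by
          refine Finset.sum_le_sum fun p _ => ?_
          split
          · exact le_rfl
          · exact mul_nonneg (by split; exacts [step_nonneg G _ _, le_rfl]) (D_nonneg G q0 t q)
      _ = D G q0 t q := by rw [← Finset.sum_mul, kernel_sum, step_sum G hd, one_mul]

lemma uncov_anti (hd : ∀ x, 0 < G.degree x) (q0 : V × Finset V) : ∀ s t, s ≤ t → uncov G q0 t ≤ uncov G q0 s := by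
  intro s t h
  induction t with
  | zero => simp_all
  | succ t ih =>
    rcases Nat.lt_or_ge s (t+1) with h' | h'
    · exact (uncov_succ_le G hd q0 t).trans (ih (Nat.lt_succ_iff.mp h'))
    · have : s = t + 1 := le_antisymm h h'
      rw [this]

end CCaux

namespace CCaux
variable {V : Type*} [Fintype V] [DecidableEq V]
variable (G : SimpleGraph V) [DecidableRel G.Adj]

lemma step_ge {x y : V} (h : G.Adj x y) :
    ((Fintype.card V : ℝ))⁻¹ ≤ SimpleGraph.step G x y := by
  unfold SimpleGraph.step
  rw [if_pos h]
  have h1 : 0 < G.degree x := by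
    rw [G.degree_pos_iff_exists_adj]; exact ⟨y, h⟩
  have h2 : (G.degree x : ℝ) ≤ (Fintype.card V : ℝ) := by
    exact_mod_cast (G.degree_lt_card_verts x).le
  exact inv_anti₀ (by exact_mod_cast h1) h2

lemma follow_walk {a b : V} (w : G.Walk a b) :
    ∀ S : Finset V, a ∈ S →
      ((Fintype.card V : ℝ))⁻¹ ^ w.length ≤ D G (a, S) w.length (b, S ∪ w.support.toFinset) := by
  induction w with
  | @nil u =>
    intro S ha
    have hset : S ∪ (SimpleGraph.Walk.nil : G.Walk u u).support.toFinset = S := by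
      rw [SimpleGraph.Walk.support_nil]
      simp only [List.toFinset_cons, List.toFinset_nil, LawfulSingleton.insert_empty_eq]
      exact Finset.union_eq_left.mpr (Finset.singleton_subset_iff.mpr ha)
    simp [D, hset, ha]
  | @cons a c b h w' ih =>
    intro S ha
    have hlen : (SimpleGraph.Walk.cons h w').length = 1 + w'.length := by
      rw [SimpleGraph.Walk.length_cons, Nat.add_comm]
    rw [hlen, D_chapman]
    have hone : D G (a, S) 1 (c, insert c S) = SimpleGraph.step G a c := by
      simp only [D]
      rw [Fintype.sum_eq_single ((a, S) : V × Finset V)]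
      · simp
      · intro q hq
        rw [if_neg hq, mul_zero]
    have hset : insert c S ∪ w'.support.toFinset
        = S ∪ (SimpleGraph.Walk.cons h w').support.toFinset := by
      have hc : c ∈ w'.support.toFinset := by simp
      ext x
      simp only [SimpleGraph.Walk.support_cons, List.toFinset_cons, Finset.mem_union,
        Finset.mem_insert]
      constructor
      · rintro ((rfl | hx) | hx)
        · right; right; simpa using hc
        · exact Or.inl hx
        · exact Or.inr (Or.inr hx)
      · rintro (hx | rfl | hx)
        · exact Or.inl (Or.inr hx)
        · exact Or.inl (Or.inr ha)
        · exact Or.inr hx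
    have hIH := ih (insert c S) (Finset.mem_insert_self c S)
    rw [hset] at hIH
    calc ((Fintype.card V : ℝ))⁻¹ ^ (1 + w'.length)
        = ((Fintype.card V : ℝ))⁻¹ * ((Fintype.card V : ℝ))⁻¹ ^ w'.length := by
          rw [pow_add, pow_one]
      _ ≤ D G (a, S) 1 (c, insert c S)
            * D G ((c, insert c S) : V × Finset V) w'.length
              (b, S ∪ (SimpleGraph.Walk.cons h w').support.toFinset) := by
          refine mul_le_mul ?_ hIH (by positivity) (D_nonneg G _ _ _)
          rw [hone]; exact step_ge G h
      _ ≤ ∑ q : V × Finset V, D G (a, S) 1 q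
            * D G q w'.length (b, S ∪ (SimpleGraph.Walk.cons h w').support.toFinset) := by
          exact Finset.single_le_sum
            (f := fun q : V × Finset V => D G (a, S) 1 q
              * D G q w'.length (b, S ∪ (SimpleGraph.Walk.cons h w').support.toFinset))
            (fun q _ => mul_nonneg (D_nonneg G _ _ _) (D_nonneg G _ _ _)) (Finset.mem_univ _)

lemma exists_cover_walk (hG : G.Connected) (a : V) :
    ∃ w : G.Walk a a, ∀ u : V, u ∈ w.support := by
  have key : ∀ l : List V, ∃ w : G.Walk a a, ∀ u ∈ l, u ∈ w.support := by
    intro l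
    induction l with
    | nil => exact ⟨SimpleGraph.Walk.nil, by simp⟩
    | cons u l ih =>
      obtain ⟨w, hw⟩ := ih
      obtain ⟨w1⟩ := hG.preconnected a u
      refine ⟨(w1.append w1.reverse).append w, ?_⟩
      intro x hx
      rw [SimpleGraph.Walk.mem_support_append_iff, SimpleGraph.Walk.mem_support_append_iff]
      rcases List.mem_cons.mp hx with rfl | hx
      · exact Or.inl (Or.inl (SimpleGraph.Walk.end_mem_support w1))
      · exact Or.inr (hw x hx)
  obtain ⟨w, hw⟩ := key (Finset.univ.toList)
  exact ⟨w, fun u => hw u (by simp)⟩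

end CCaux

namespace CCaux
variable {V : Type*} [Fintype V] [DecidableEq V]
variable (G : SimpleGraph V) [DecidableRel G.Adj]

lemma deg_pos (hG : G.Connected) (hc : 1 < Fintype.card V) (x : V) : 0 < G.degree x := by
  obtain ⟨y, hy⟩ := Fintype.exists_ne_of_one_lt_card hc x
  obtain ⟨w⟩ := hG.preconnected x y
  cases w with
  | nil => exact absurd rfl hy
  | cons h _ => rw [G.degree_pos_iff_exists_adj]; exact ⟨_, h⟩

lemma uncov_univ_eq_zero {q : V × Finset V} (hq : q.2 = Finset.univ) (t : ℕ) :
    uncov G q t = 0 := by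
  refine Finset.sum_eq_zero fun p _ => ?_
  rcases eq_or_ne p.2 Finset.univ with h1 | h1
  · simp [h1]
  · rw [if_pos h1]
    by_contra hz
    refine h1 (Finset.eq_univ_iff_forall.mpr fun x => ?_)
    exact (hq ▸ D_subset G q t p hz) (Finset.mem_univ x)

lemma uncov_split (q : V × Finset V) (t : ℕ) :
    uncov G q t + (∑ p : V × Finset V, if p.2 = Finset.univ then D G q t p else 0)
      = ∑ p : V × Finset V, D G q t p := by
  unfold uncov
  rw [← Finset.sum_add_distrib]
  refine Finset.sum_congr rfl fun p _ => ?_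
  rcases eq_or_ne p.2 Finset.univ with h1 | h1 <;> simp [h1]

/-- uniform covering bound -/
lemma uniform_cover (hG : G.Connected) (hc : 1 < Fintype.card V) (T : ℕ)
    (hT : ∀ a : V, ∃ w : G.Walk a a, (∀ u : V, u ∈ w.support) ∧ w.length ≤ T)
    (a : V) (S : Finset V) (ha : a ∈ S) (hd : ∀ x, 0 < G.degree x) :
    uncov G (a, S) T ≤ 1 - ((Fintype.card V : ℝ))⁻¹ ^ T := by
  obtain ⟨w, hw, hwl⟩ := hT a
  set δ : ℝ := ((Fintype.card V : ℝ))⁻¹ with hδ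
  have hδ0 : 0 < δ := by
    rw [hδ]; positivity
  have hδ1 : δ ≤ 1 := by
    rw [hδ]
    have h1 : (1 : ℝ) ≤ (Fintype.card V : ℝ) := by
      exact_mod_cast Nat.one_le_of_lt hc
    exact inv_le_one_of_one_le₀ h1
  have hp2 : S ∪ w.support.toFinset = Finset.univ := by
    refine Finset.eq_univ_of_forall fun x => ?_
    exact Finset.mem_union_right _ (List.mem_toFinset.mpr (hw x))
  have h1 : δ ^ w.length ≤ D G (a, S) w.length (a, S ∪ w.support.toFinset) :=
    follow_walk G w S ha
  have h2 : D G (a, S) w.length (a, S ∪ w.support.toFinset)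
      ≤ ∑ p : V × Finset V, if p.2 = Finset.univ then D G (a, S) w.length p else 0 := by
    have := Finset.single_le_sum
      (f := fun p : V × Finset V => if p.2 = Finset.univ then D G (a, S) w.length p else 0)
      (fun p _ => by
        by_cases hp : p.2 = Finset.univ
        · rw [if_pos hp]; exact D_nonneg G _ _ _
        · rw [if_neg hp])
      (Finset.mem_univ ((a, S ∪ w.support.toFinset) : V × Finset V))
    simp only at this
    rwa [if_pos hp2] at this
  have h3 : uncov G (a, S) w.length ≤ 1 - δ ^ w.length := by
    have hsum := uncov_split G ((a, S) : V × Finset V) w.length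
    rw [D_sum G hd] at hsum
    linarith
  calc uncov G (a, S) T ≤ uncov G (a, S) w.length := uncov_anti G hd _ _ _ hwl
    _ ≤ 1 - δ ^ w.length := h3
    _ ≤ 1 - δ ^ T := by
        have := pow_le_pow_of_le_one hδ0.le hδ1 hwl
        linarith

end CCaux

namespace CCaux
variable {V : Type*} [Fintype V] [DecidableEq V]
variable (G : SimpleGraph V) [DecidableRel G.Adj]

lemma uncov_swap (q0 : V × Finset V) (s t : ℕ) :
    uncov G q0 (s + t) = ∑ q : V × Finset V, D G q0 s q * uncov G q t := by
  unfold uncov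
  simp_rw [D_chapman G q0 s t]
  have : ∀ p : V × Finset V,
      (if p.2 ≠ Finset.univ then ∑ q : V × Finset V, D G q0 s q * D G q t p else 0)
      = ∑ q : V × Finset V,
          (if p.2 ≠ Finset.univ then D G q0 s q * D G q t p else 0) := by
    intro p; split
    · rfl
    · rw [Finset.sum_const_zero]
  simp_rw [this]
  rw [Finset.sum_comm]
  refine Finset.sum_congr rfl fun q _ => ?_
  rw [Finset.mul_sum]
  refine Finset.sum_congr rfl fun p _ => ?_
  split
  · rfl
  · rw [mul_zero]

/-- geometric decay of the uncovered probability -/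
lemma uncov_decay (hG : G.Connected) (hc : 1 < Fintype.card V) (T : ℕ)
    (hT : ∀ a : V, ∃ w : G.Walk a a, (∀ u : V, u ∈ w.support) ∧ w.length ≤ T)
    (r : V) (s : ℕ) (hd : ∀ x, 0 < G.degree x) :
    uncov G (r, ({r} : Finset V)) (s + T)
      ≤ (1 - ((Fintype.card V : ℝ))⁻¹ ^ T) * uncov G (r, ({r} : Finset V)) s := by
  set ε : ℝ := ((Fintype.card V : ℝ))⁻¹ ^ T with hε
  have hε0 : 0 < ε := by rw [hε]; positivity
  have h1 : (1 : ℝ) ≤ (Fintype.card V : ℝ) := by exact_mod_cast Nat.one_le_of_lt hc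
  have hε1 : ε ≤ 1 := by
    rw [hε]
    exact pow_le_one₀ (by positivity) (inv_le_one_of_one_le₀ h1)
  rw [uncov_swap]
  have hrhs : (1 - ε) * uncov G ((r, ({r} : Finset V)) : V × Finset V) s
      = ∑ q : V × Finset V, (1 - ε) * (if q.2 ≠ Finset.univ
          then D G ((r, ({r} : Finset V)) : V × Finset V) s q else 0) := by
    unfold uncov; rw [Finset.mul_sum]
  rw [hrhs]
  refine Finset.sum_le_sum fun q _ => ?_
  rcases eq_or_ne (D G ((r, ({r} : Finset V)) : V × Finset V) s q) 0 with hz | hz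
  · rw [hz, zero_mul]
    refine mul_nonneg (by linarith) ?_
    simp [hz]
  · have hq1 : q.1 ∈ q.2 := D_mem G _ (Finset.mem_singleton_self r) s q hz
    rcases eq_or_ne q.2 Finset.univ with hu | hu
    · rw [uncov_univ_eq_zero G hu, mul_zero, if_neg (not_not_intro hu), mul_zero]
    · rw [if_pos hu]
      have hb : uncov G q T ≤ 1 - ε := by
        have := uniform_cover G hG hc T hT q.1 q.2 hq1 hd
        simpa [hε] using this
      calc D G ((r, ({r} : Finset V)) : V × Finset V) s q * uncov G q T
          ≤ D G ((r, ({r} : Finset V)) : V × Finset V) s q * (1 - ε) :=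
            mul_le_mul_of_nonneg_left hb (D_nonneg G _ _ _)
        _ = (1 - ε) * D G ((r, ({r} : Finset V)) : V × Finset V) s q := mul_comm _ _

end CCaux

namespace CCaux
variable {V : Type*} [Fintype V] [DecidableEq V]
variable (G : SimpleGraph V) [DecidableRel G.Adj]

lemma uncov_geom (hG : G.Connected) (hc : 1 < Fintype.card V) (T : ℕ)
    (hT : ∀ a : V, ∃ w : G.Walk a a, (∀ u : V, u ∈ w.support) ∧ w.length ≤ T)
    (r : V) (hd : ∀ x, 0 < G.degree x) (k : ℕ) :
    uncov G (r, ({r} : Finset V)) (k * T) ≤ (1 - ((Fintype.card V : ℝ))⁻¹ ^ T) ^ k := by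
  induction k with
  | zero => simpa using uncov_le_one G hd _ 0
  | succ k ih =>
    have hε0 : (0:ℝ) < ((Fintype.card V : ℝ))⁻¹ ^ T := by positivity
    have h1 : (1 : ℝ) ≤ (Fintype.card V : ℝ) := by exact_mod_cast Nat.one_le_of_lt hc
    have hε1 : ((Fintype.card V : ℝ))⁻¹ ^ T ≤ 1 := pow_le_one₀ (by positivity) (inv_le_one_of_one_le₀ h1)
    have hstep := uncov_decay G hG hc T hT r (k * T) hd
    have : (k + 1) * T = k * T + T := by ring
    rw [this]
    calc uncov G (r, ({r} : Finset V)) (k * T + T)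
        ≤ (1 - ((Fintype.card V : ℝ))⁻¹ ^ T) * uncov G (r, ({r} : Finset V)) (k * T) := hstep
      _ ≤ (1 - ((Fintype.card V : ℝ))⁻¹ ^ T) * (1 - ((Fintype.card V : ℝ))⁻¹ ^ T) ^ k :=
          mul_le_mul_of_nonneg_left ih (by linarith)
      _ = (1 - ((Fintype.card V : ℝ))⁻¹ ^ T) ^ (k + 1) := (pow_succ' _ _).symm

lemma summable_uncov (hG : G.Connected) (hc : 1 < Fintype.card V) (r : V)
    (hd : ∀ x, 0 < G.degree x) :
    Summable (fun t => uncov G (r, ({r} : Finset V)) t) := by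
  obtain ⟨T, hT1, hT⟩ : ∃ T : ℕ, 1 ≤ T ∧
      ∀ a : V, ∃ w : G.Walk a a, (∀ u : V, u ∈ w.support) ∧ w.length ≤ T := by
    choose w hw using exists_cover_walk G hG
    refine ⟨(Finset.univ.sup fun a => (w a).length) + 1, le_add_self, fun a => ?_⟩
    refine ⟨w a, hw a, le_trans ?_ (Nat.le_succ _)⟩
    exact Finset.le_sup (f := fun a => (w a).length) (Finset.mem_univ a)
  set ρ : ℝ := 1 - ((Fintype.card V : ℝ))⁻¹ ^ T with hρ
  have hε0 : (0:ℝ) < ((Fintype.card V : ℝ))⁻¹ ^ T := by positivity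
  have h1 : (1 : ℝ) ≤ (Fintype.card V : ℝ) := by exact_mod_cast Nat.one_le_of_lt hc
  have hε1 : ((Fintype.card V : ℝ))⁻¹ ^ T ≤ 1 := pow_le_one₀ (by positivity) (inv_le_one_of_one_le₀ h1)
  have hρ0 : 0 ≤ ρ := by rw [hρ]; linarith
  have hρ1 : ρ < 1 := by rw [hρ]; linarith
  have hgeom : Summable (fun k : ℕ => ρ ^ k) := summable_geometric_of_lt_one hρ0 hρ1
  refine summable_of_sum_range_le (c := (T : ℝ) * ∑' k : ℕ, ρ ^ k)
    (fun t => uncov_nonneg G _ t) (fun N => ?_)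
  have key : ∀ K : ℕ, ∑ t ∈ Finset.range (K * T), uncov G (r, ({r} : Finset V)) t
      ≤ (T : ℝ) * ∑ k ∈ Finset.range K, ρ ^ k := by
    intro K
    induction K with
    | zero => simp
    | succ K ih =>
      have hKT : (K + 1) * T = K * T + T := by ring
      rw [hKT, Finset.sum_range_add, Finset.sum_range_succ, mul_add]
      refine add_le_add ih ?_
      calc ∑ j ∈ Finset.range T, uncov G (r, ({r} : Finset V)) (K * T + j)
          ≤ ∑ _j ∈ Finset.range T, uncov G (r, ({r} : Finset V)) (K * T) :=
            Finset.sum_le_sum fun j _ => uncov_anti G hd _ _ _ (Nat.le_add_right _ _)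
        _ = (T : ℝ) * uncov G (r, ({r} : Finset V)) (K * T) := by
            rw [Finset.sum_const, Finset.card_range, nsmul_eq_mul]
        _ ≤ (T : ℝ) * ρ ^ K := by
            refine mul_le_mul_of_nonneg_left ?_ (by positivity)
            exact uncov_geom G hG hc T hT r hd K
  calc ∑ t ∈ Finset.range N, uncov G (r, ({r} : Finset V)) t
      ≤ ∑ t ∈ Finset.range (N * T), uncov G (r, ({r} : Finset V)) t := by
        refine Finset.sum_le_sum_of_subset_of_nonneg ?_ fun t _ _ => uncov_nonneg G _ t
        exact Finset.range_subset_range.mpr (Nat.le_mul_of_pos_right N hT1)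
    _ ≤ (T : ℝ) * ∑ k ∈ Finset.range N, ρ ^ k := key N
    _ ≤ (T : ℝ) * ∑' k : ℕ, ρ ^ k := by
        refine mul_le_mul_of_nonneg_left ?_ (by positivity)
        exact Summable.sum_le_tsum _ (fun k _ => by positivity) hgeom

end CCaux

namespace CCaux
variable {V : Type*} [Fintype V] [DecidableEq V]
variable (G : SimpleGraph V) [DecidableRel G.Adj]

lemma D_one (q0 p : V × Finset V) :
    D G q0 1 p = if p.2 = insert p.1 q0.2 then SimpleGraph.step G q0.1 p.1 else 0 := by
  simp only [D]
  rw [Fintype.sum_eq_single q0]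
  · simp
  · intro q hq
    rw [if_neg hq, mul_zero]

end CCaux

end AuxCC

/-- For every finite connected graph `G` on `n+1` vertices (`n ≥ 2`) and starting vertex `r`,
`cc_r(G) < CT_r(G) < CC_r(G)`, where `CC_r(G) = n · cc_r(G)`. -/
theorem coverCost_lt_coverTime_lt_CoverCost {V : Type*} [Fintype V] [DecidableEq V]
    (G : SimpleGraph V) [DecidableRel G.Adj] (hG : G.Connected)
    (n : ℕ) (hcard : Fintype.card V = n + 1) (hn : 2 ≤ n) (r : V) :
    G.coverCost r < G.coverTime r ∧ G.coverTime r < (n : ℝ) * G.coverCost r := by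
  classical
  have hc : 1 < Fintype.card V := by rw [hcard]; omega
  have hc3 : 2 < Fintype.card V := by rw [hcard]; omega
  have hd : ∀ x, 0 < G.degree x := CCaux.deg_pos G hG hc
  have hnR : (0:ℝ) < (n:ℝ) := by exact_mod_cast Nat.lt_of_lt_of_le Nat.zero_lt_two hn
  have hDef : ∀ t (p : V × Finset V), G.coverDist r t p = CCaux.D G (r, ({r} : Finset V)) t p := by
    intro t
    induction t with
    | zero => intro p; rfl
    | succ t ih =>
      intro p
      simp only [SimpleGraph.coverDist, CCaux.D]
      exact Finset.sum_congr rfl fun q _ => by rw [ih]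
  set q0 : V × Finset V := (r, ({r} : Finset V)) with hq0
  set u : ℕ → ℝ := fun t => CCaux.uncov G q0 t with hu
  set F : ℕ → ℝ := fun t => ∑ p : V × Finset V, if p.2 ≠ Finset.univ then
      CCaux.D G q0 t p * (1 - ((p.2.erase r).card : ℝ) / ((Fintype.card V : ℝ) - 1))
    else 0 with hF
  have hCT : G.coverTime r = ∑' t, u t := by
    refine tsum_congr fun t => Finset.sum_congr rfl fun p _ => ?_
    rw [hDef]
  have hCC : G.coverCost r = ∑' t, F t := by
    refine tsum_congr fun t => Finset.sum_congr rfl fun p _ => ?_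
    rw [hDef]
  have hn' : ((Fintype.card V : ℝ) - 1) = (n : ℝ) := by rw [hcard]; push_cast; ring
  have hwle : ∀ p : V × Finset V,
      (1 - ((p.2.erase r).card : ℝ) / ((Fintype.card V : ℝ) - 1)) ≤ 1 := by
    intro p
    rw [hn']
    have h0 : (0:ℝ) ≤ ((p.2.erase r).card : ℝ) / (n : ℝ) := by positivity
    linarith
  have hsupp : ∀ (t : ℕ) (p : V × Finset V), CCaux.D G q0 t p ≠ 0 → p.2 ≠ Finset.univ →
      ((p.2.erase r).card : ℝ) ≤ (n : ℝ) - 1 := by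
    intro t p hz hp
    have hrmem : r ∈ p.2 := CCaux.D_subset G q0 t p hz (Finset.mem_singleton_self r)
    have h1 : (p.2.erase r).card = p.2.card - 1 := Finset.card_erase_of_mem hrmem
    have h2 : p.2.card < Fintype.card V := by
      have := Finset.card_lt_card (Finset.ssubset_univ_iff.mpr hp)
      simpa [Finset.card_univ] using this
    have h3 : 1 ≤ p.2.card := Finset.card_pos.mpr ⟨r, hrmem⟩
    have h4 : (p.2.erase r).card ≤ n - 1 := by omega
    have h5 : ((p.2.erase r).card : ℝ) ≤ ((n - 1 : ℕ) : ℝ) := by exact_mod_cast h4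
    calc ((p.2.erase r).card : ℝ) ≤ ((n - 1 : ℕ) : ℝ) := h5
      _ = (n : ℝ) - 1 := by
          have : 1 ≤ n := by omega
          push_cast [this]; ring
  have hFnn : ∀ t, 0 ≤ F t := by
    intro t
    refine Finset.sum_nonneg fun p _ => ?_
    by_cases hp : p.2 ≠ Finset.univ
    · rw [if_pos hp]
      rcases eq_or_ne (CCaux.D G q0 t p) 0 with hz | hz
      · rw [hz, zero_mul]
      · have hk := hsupp t p hz hp
        have hD := CCaux.D_nonneg G q0 t p
        have hw : 0 ≤ 1 - ((p.2.erase r).card : ℝ) / ((Fintype.card V : ℝ) - 1) := by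
          rw [hn', sub_nonneg, div_le_one hnR]
          linarith
        positivity
    · rw [if_neg hp]
  have hFu : ∀ t, F t ≤ u t := by
    intro t
    refine Finset.sum_le_sum fun p _ => ?_
    by_cases hp : p.2 ≠ Finset.univ
    · rw [if_pos hp, if_pos hp]
      have hD := CCaux.D_nonneg G q0 t p
      calc CCaux.D G q0 t p * (1 - ((p.2.erase r).card : ℝ) / ((Fintype.card V : ℝ) - 1))
          ≤ CCaux.D G q0 t p * 1 := mul_le_mul_of_nonneg_left (hwle p) hD
        _ = CCaux.D G q0 t p := mul_one _
    · rw [if_neg hp, if_neg hp]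
  have huF : ∀ t, u t ≤ (n : ℝ) * F t := by
    intro t
    rw [hu, hF]
    simp only
    rw [Finset.mul_sum]
    unfold CCaux.uncov
    refine Finset.sum_le_sum fun p _ => ?_
    by_cases hp : p.2 ≠ Finset.univ
    · rw [if_pos hp, if_pos hp]
      rcases eq_or_ne (CCaux.D G q0 t p) 0 with hz | hz
      · rw [hz, zero_mul, mul_zero]
      · have hk := hsupp t p hz hp
        have hD : 0 < CCaux.D G q0 t p := lt_of_le_of_ne (CCaux.D_nonneg G q0 t p) (Ne.symm hz)
        rw [hn']
        have heq : (n : ℝ) * (CCaux.D G q0 t p * (1 - ((p.2.erase r).card : ℝ) / (n : ℝ)))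
            = CCaux.D G q0 t p * ((n : ℝ) - ((p.2.erase r).card : ℝ)) := by
          field_simp
        rw [heq]
        nlinarith
    · rw [if_neg hp, if_neg hp, mul_zero]
  have hsumu : Summable u := CCaux.summable_uncov G hG hc r hd
  have hsumF : Summable F := Summable.of_nonneg_of_le hFnn hFu hsumu
  obtain ⟨v, hadj⟩ : ∃ v, G.Adj r v := by
    have := hd r
    rwa [G.degree_pos_iff_exists_adj] at this
  have hvr : v ≠ r := fun h => G.loopless.irrefl r (h ▸ hadj)
  have hstepv : 0 < SimpleGraph.step G r v := by
    unfold SimpleGraph.step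
    rw [if_pos hadj]
    have := hd r
    positivity
  set pstar : V × Finset V := (v, insert v {r}) with hpstar
  have hpne : pstar.2 ≠ Finset.univ := by
    intro hcon
    have h2 : (insert v ({r} : Finset V)).card ≤ 2 := by
      refine le_trans (Finset.card_insert_le _ _) ?_
      simp
    rw [hpstar] at hcon
    simp only at hcon
    rw [hcon, Finset.card_univ] at h2
    omega
  have hDstar : CCaux.D G q0 1 pstar = SimpleGraph.step G r v := by
    rw [CCaux.D_one]
    simp [hpstar, hq0]
  have herase : (pstar.2.erase r) = {v} := by
    rw [hpstar]
    simp only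
    rw [Finset.erase_insert_of_ne hvr, Finset.erase_singleton]
    rfl
  have hk1 : ((pstar.2.erase r).card : ℝ) = 1 := by rw [herase]; simp
  have hstrict1 : F 1 < u 1 := by
    rw [hu, hF]
    simp only
    unfold CCaux.uncov
    refine Finset.sum_lt_sum (fun p _ => ?_) ⟨pstar, Finset.mem_univ _, ?_⟩
    · by_cases hp : p.2 ≠ Finset.univ
      · rw [if_pos hp, if_pos hp]
        have hD := CCaux.D_nonneg G q0 1 p
        calc CCaux.D G q0 1 p * (1 - ((p.2.erase r).card : ℝ) / ((Fintype.card V : ℝ) - 1))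
            ≤ CCaux.D G q0 1 p * 1 := mul_le_mul_of_nonneg_left (hwle p) hD
          _ = CCaux.D G q0 1 p := mul_one _
      · rw [if_neg hp, if_neg hp]
    · rw [if_pos hpne, if_pos hpne, hDstar]
      have hwlt : 1 - ((pstar.2.erase r).card : ℝ) / ((Fintype.card V : ℝ) - 1) < 1 := by
        rw [hn', hk1]
        have h0 : (0:ℝ) < 1 / (n : ℝ) := by positivity
        linarith
      nlinarith [hstepv, hwlt]
  have hrne : ({r} : Finset V) ≠ Finset.univ := by
    intro hcon
    have hcv : (Finset.univ : Finset V).card = Fintype.card V := Finset.card_univ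
    rw [← hcon] at hcv
    simp at hcv
    omega
  have hD00 : ∀ q : V × Finset V, CCaux.D G q0 0 q = if q = q0 then 1 else 0 := fun q => rfl
  have hu0 : u 0 = 1 := by
    rw [hu]
    simp only
    unfold CCaux.uncov
    rw [Fintype.sum_eq_single q0]
    · rw [hD00, if_pos rfl, if_pos (by rw [hq0]; exact hrne)]
    · intro q hq
      rw [hD00, if_neg hq]
      split <;> rfl
  have hF0 : F 0 = 1 := by
    rw [hF]
    simp only
    rw [Fintype.sum_eq_single q0]
    · rw [hD00, if_pos rfl, if_pos (by rw [hq0]; exact hrne), one_mul, hq0]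
      simp only [Finset.erase_singleton, Finset.card_empty]
      norm_num
    · intro q hq
      rw [hD00, if_neg hq]
      split
      · rw [zero_mul]
      · rfl
  have hstrict0 : u 0 < (n : ℝ) * F 0 := by
    rw [hu0, hF0, mul_one]
    exact_mod_cast Nat.lt_of_lt_of_le Nat.one_lt_two hn
  constructor
  · rw [hCC, hCT]
    exact Summable.tsum_lt_tsum hFu hstrict1 hsumF hsumu
  · rw [hCT, hCC, ← tsum_mul_left]
    exact Summable.tsum_lt_tsum huF hstrict0 hsumu (hsumF.mul_left _)
end
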